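/- arXiv:1605.06618 — 5 statements merged into one kernel-verified Lean document; each statement's English description precedes it below -/
import Mathlib

section
/- Fix N∈ℕ and real numbers 0<p'≤p. If h∈ℋ_p and ∫_{𝕏_T} h(s,x)^{p'} ν_T(ds,dx)<∞, then sup_{g∈S^N} ∫_{𝕏_T} h(s,x)^{p'}·(g(s,x)+1) ν_T(ds,dx) < ∞. -/
open MeasureTheory Real Filter
open scoped ENNReal

lemma young_aux {x b : ℝ} (hx : 0 ≤ x) (hb : 0 ≤ b) :
    x * b ≤ (Real.exp x - 1) + (b * Real.log b - b + 1) := by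
  rcases eq_or_lt_of_le hb with rfl | hb'
  · simp
    positivity
  · have key : b * ((x - Real.log b) + 1) ≤ Real.exp x := by
      calc b * ((x - Real.log b) + 1) ≤ b * Real.exp (x - Real.log b) := by
            apply mul_le_mul_of_nonneg_left _ hb
            linarith [Real.add_one_le_exp (x - Real.log b)]
        _ = Real.exp x := by
            rw [← Real.exp_log hb', ← Real.exp_add, Real.exp_log hb']
            ring_nf
    nlinarith

lemma exp_sub_one_le {x c : ℝ} (hx : 0 ≤ x) (hxc : x ≤ c) :
    Real.exp x - 1 ≤ x * Real.exp c := by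
  have h1 : (1 : ℝ) - x ≤ Real.exp (-x) := by linarith [Real.add_one_le_exp (-x)]
  have h2 : Real.exp (-x) * Real.exp x = 1 := by
    rw [← Real.exp_add]; simp
  have h3 : Real.exp x ≤ Real.exp c := Real.exp_le_exp.2 hxc
  nlinarith [Real.exp_pos x]

theorem stmt_0
    {𝕏 : Type*} [TopologicalSpace 𝕏] [PolishSpace 𝕏] [LocallyCompactSpace 𝕏]
    [MeasurableSpace 𝕏] [BorelSpace 𝕏]
    (T : ℝ) (hT : 0 < T)
    (ν : Measure 𝕏) [SigmaFinite ν] (hνK : ∀ Kc : Set 𝕏, IsCompact Kc → ν Kc < ⊤)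
    (νT : Measure (ℝ × 𝕏)) (hνT : νT = (volume.restrict (Set.Icc 0 T)).prod ν)
    (N : ℕ) (p p' : ℝ) (hp' : 0 < p') (hpp' : p' ≤ p)
    (h : ℝ × 𝕏 → ℝ) (hm : Measurable h) (hnn : ∀ q, 0 ≤ h q)
    (hHp : ∃ δ : ℝ, 0 < δ ∧ ∀ Γ : Set (ℝ × 𝕏), MeasurableSet Γ → νT Γ < ⊤ →
        ∫⁻ q in Γ, ENNReal.ofReal (Real.exp (δ * h q ^ p)) ∂νT < ⊤)
    (hint : ∫⁻ q, ENNReal.ofReal (h q ^ p') ∂νT < ⊤) :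
    (⨆ g ∈ {g : ℝ × 𝕏 → ℝ | Measurable g ∧ (∀ q, 0 ≤ g q) ∧
        ∫⁻ q, ENNReal.ofReal (g q * Real.log (g q) - g q + 1) ∂νT ≤ (N : ℝ≥0∞)},
      ∫⁻ q, ENNReal.ofReal (h q ^ p' * (g q + 1)) ∂νT) < ⊤ := by
  obtain ⟨δ, hδ, hHp⟩ := hHp
  have hrp' : Measurable fun q => h q ^ p' :=
    (Real.continuous_rpow_const hp'.le).measurable.comp hm
  have hrp : Measurable fun q => h q ^ p :=
    (Real.continuous_rpow_const (hp'.trans_le hpp').le).measurable.comp hm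
  have hHm : Measurable fun q => ENNReal.ofReal (h q ^ p') := hrp'.ennreal_ofReal
  set I : ℝ≥0∞ := ∫⁻ q, ENNReal.ofReal (h q ^ p') ∂νT with hI
  set Γ : Set (ℝ × 𝕏) := {q | 1 ≤ h q} with hΓ
  have hΓm : MeasurableSet Γ := measurableSet_le measurable_const hm
  have hΓfin : νT Γ < ⊤ := by
    have hle : νT Γ ≤ ∫⁻ q in Γ, ENNReal.ofReal (h q ^ p') ∂νT := by
      rw [← setLIntegral_one]
      refine setLIntegral_mono' hΓm fun q hq => ?_
      have : (1 : ℝ) ≤ h q ^ p' := Real.one_le_rpow hq hp'.le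
      simpa using ENNReal.ofReal_le_ofReal this
    exact lt_of_le_of_lt (hle.trans (setLIntegral_le_lintegral _ _)) hint
  -- E: integral of exp(δ h^{p'}) - 1 is finite
  set E : ℝ≥0∞ := ∫⁻ q, ENNReal.ofReal (Real.exp (δ * h q ^ p') - 1) ∂νT with hE
  have hEfin : E < ⊤ := by
    have hpt : ∀ q, ENNReal.ofReal (Real.exp (δ * h q ^ p') - 1) ≤
        Γ.indicator (fun q => ENNReal.ofReal (Real.exp (δ * h q ^ p))) q +
          ENNReal.ofReal (δ * Real.exp δ) * ENNReal.ofReal (h q ^ p') := by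
      intro q
      by_cases hq : q ∈ Γ
      · have h1 : h q ^ p' ≤ h q ^ p := Real.rpow_le_rpow_of_exponent_le hq hpp'
        have h2 : Real.exp (δ * h q ^ p') - 1 ≤ Real.exp (δ * h q ^ p) := by
          have := Real.exp_le_exp.2 (mul_le_mul_of_nonneg_left h1 hδ.le)
          linarith
        rw [Set.indicator_of_mem hq]
        exact le_add_right (ENNReal.ofReal_le_ofReal h2)
      · have hq1 : h q < 1 := not_le.1 hq
        have hle1 : h q ^ p' ≤ 1 := Real.rpow_le_one (hnn q) hq1.le hp'.le
        have hx0 : 0 ≤ δ * h q ^ p' :=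
          mul_nonneg hδ.le (Real.rpow_nonneg (hnn q) p')
        have hxc : δ * h q ^ p' ≤ δ := by nlinarith
        have h2 : Real.exp (δ * h q ^ p') - 1 ≤ (δ * Real.exp δ) * h q ^ p' := by
          have := exp_sub_one_le hx0 hxc
          nlinarith [Real.exp_pos δ]
        rw [Set.indicator_of_notMem hq]
        calc ENNReal.ofReal (Real.exp (δ * h q ^ p') - 1)
            ≤ ENNReal.ofReal ((δ * Real.exp δ) * h q ^ p') := ENNReal.ofReal_le_ofReal h2
          _ = ENNReal.ofReal (δ * Real.exp δ) * ENNReal.ofReal (h q ^ p') :=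
              ENNReal.ofReal_mul (by positivity)
          _ ≤ _ := le_add_self
    calc E ≤ ∫⁻ q, (Γ.indicator (fun q => ENNReal.ofReal (Real.exp (δ * h q ^ p))) q +
            ENNReal.ofReal (δ * Real.exp δ) * ENNReal.ofReal (h q ^ p')) ∂νT :=
          lintegral_mono hpt
      _ = (∫⁻ q in Γ, ENNReal.ofReal (Real.exp (δ * h q ^ p)) ∂νT) +
            ENNReal.ofReal (δ * Real.exp δ) * I := by
          have hmexp : Measurable fun q => ENNReal.ofReal (Real.exp (δ * h q ^ p)) :=
            ((hrp.const_mul δ).exp).ennreal_ofReal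
          rw [lintegral_add_left (hmexp.indicator hΓm), lintegral_const_mul _ hHm,
            lintegral_indicator hΓm]
      _ < ⊤ := by
          refine ENNReal.add_lt_top.2 ⟨hHp Γ hΓm hΓfin, ?_⟩
          exact ENNReal.mul_lt_top ENNReal.ofReal_lt_top hint
  set C : ℝ≥0∞ := (E + N) / ENNReal.ofReal δ + I with hC
  have hCfin : C < ⊤ := by
    refine ENNReal.add_lt_top.2 ⟨?_, hint⟩
    exact ENNReal.div_lt_top (ENNReal.add_lt_top.2 ⟨hEfin, ENNReal.natCast_lt_top N⟩).ne
      (ENNReal.ofReal_pos.2 hδ).ne'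
  refine lt_of_le_of_lt (iSup₂_le fun g hg => ?_) hCfin
  obtain ⟨hgm, hgnn, hgL⟩ := hg
  have hsplit : ∫⁻ q, ENNReal.ofReal (h q ^ p' * (g q + 1)) ∂νT
      = (∫⁻ q, ENNReal.ofReal (h q ^ p' * g q) ∂νT) + I := by
    rw [← lintegral_add_right _ hHm]
    refine lintegral_congr fun q => ?_
    rw [← ENNReal.ofReal_add (mul_nonneg (Real.rpow_nonneg (hnn q) p') (hgnn q))
      (Real.rpow_nonneg (hnn q) p')]
    congr 1; ring
  have hkey : ENNReal.ofReal δ * ∫⁻ q, ENNReal.ofReal (h q ^ p' * g q) ∂νT ≤ E + N := by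
    rw [← lintegral_const_mul _ (f := fun q => ENNReal.ofReal (h q ^ p' * g q))
      ((hrp'.mul hgm).ennreal_ofReal)]
    calc ∫⁻ q, ENNReal.ofReal δ * ENNReal.ofReal (h q ^ p' * g q) ∂νT
        ≤ ∫⁻ q, (ENNReal.ofReal (Real.exp (δ * h q ^ p') - 1)
            + ENNReal.ofReal (g q * Real.log (g q) - g q + 1)) ∂νT := by
          refine lintegral_mono fun q => ?_
          rw [← ENNReal.ofReal_mul hδ.le]
          have hy := young_aux (x := δ * h q ^ p') (b := g q)
            (mul_nonneg hδ.le (Real.rpow_nonneg (hnn q) p')) (hgnn q)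
          have heq : δ * (h q ^ p' * g q) = (δ * h q ^ p') * g q := by ring
          calc ENNReal.ofReal (δ * (h q ^ p' * g q))
              ≤ ENNReal.ofReal ((Real.exp (δ * h q ^ p') - 1)
                  + (g q * Real.log (g q) - g q + 1)) := by
                rw [heq]; exact ENNReal.ofReal_le_ofReal hy
            _ ≤ _ := ENNReal.ofReal_add_le
      _ = E + ∫⁻ q, ENNReal.ofReal (g q * Real.log (g q) - g q + 1) ∂νT :=
          lintegral_add_left (((hrp'.const_mul δ).exp.sub measurable_const).ennreal_ofReal) _
      _ ≤ E + N := add_le_add_right hgL E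
  have hb1 : ∫⁻ q, ENNReal.ofReal (h q ^ p' * g q) ∂νT ≤ (E + N) / ENNReal.ofReal δ := by
    rw [ENNReal.le_div_iff_mul_le (Or.inl (ENNReal.ofReal_pos.2 hδ).ne')
      (Or.inl ENNReal.ofReal_ne_top), mul_comm]
    exact hkey
  rw [hsplit]
  exact add_le_add_left hb1 I
end

section
/- Fix N∈ℕ. If h∈ℋ_2 and ∫_{𝕏_T} h(s,x)² ν_T(ds,dx)<∞, then sup_{g∈S^N} ∫_{𝕏_T} h(s,x)·|g(s,x)−1| ν_T(ds,dx) < ∞. -/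
open MeasureTheory Real Filter
open scoped ENNReal

lemma dual_ineq (z b : ℝ) (hb : 0 ≤ b) :
    z * b ≤ (b * Real.log b - b + 1) + (Real.exp z - 1) := by
  rcases eq_or_lt_of_le hb with h0 | h0
  · simp [← h0]
    nlinarith [Real.exp_pos z]
  · have h1 : z - Real.log b + 1 ≤ Real.exp (z - Real.log b) := Real.add_one_le_exp _
    have h2 : b * (z - Real.log b + 1) ≤ b * Real.exp (z - Real.log b) :=
      mul_le_mul_of_nonneg_left h1 h0.le
    have h3 : b * Real.exp (z - Real.log b) = Real.exp z := by
      rw [Real.exp_sub, Real.exp_log h0]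
      field_simp
    nlinarith

lemma l_nonneg (b : ℝ) (hb : 0 ≤ b) : 0 ≤ b * Real.log b - b + 1 := by
  have := dual_ineq 0 b hb
  simp [Real.exp_zero] at this
  linarith

lemma exp_sub_bound (a : ℝ) (h0 : 0 ≤ a) (h1 : a ≤ 1) :
    Real.exp a - 1 - a ≤ a ^ 2 := by
  have hx : |a| ≤ 1 := by rw [abs_of_nonneg h0]; exact h1
  have hb := Real.exp_bound hx (n := 2) (by norm_num)
  simp [Finset.sum_range_succ] at hb
  rw [abs_le] at hb
  have h2 : |a| ^ 2 = a ^ 2 := by rw [sq_abs]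
  nlinarith [hb.2]

lemma key_ineq (δ a b : ℝ) (hδ : 0 < δ) (ha : 0 ≤ a) (hb : 0 ≤ b) :
    a * |b - 1| ≤ (a ^ 2 + (1/δ) * Real.exp (δ * a ^ 2) * (if 1 ≤ a then 1 else 0))
      + (1 + 1/δ) * (b * Real.log b - b + 1) := by
  have hl := l_nonneg b hb
  have hδ' : 0 ≤ 1/δ := by positivity
  by_cases hca : 1 ≤ a
  · simp only [if_pos hca]
    have habs : |b - 1| ≤ b + 1 := by
      rw [abs_le]; constructor <;> linarith
    have h1 : (δ * a) * b ≤ (b * Real.log b - b + 1) + (Real.exp (δ * a) - 1) :=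
      dual_ineq _ _ hb
    have ha2 : a ≤ a ^ 2 := by nlinarith
    have h2 : Real.exp (δ * a) ≤ Real.exp (δ * a ^ 2) := by
      apply Real.exp_le_exp.mpr
      nlinarith [mul_le_mul_of_nonneg_left ha2 hδ.le]
    have h3 : a * b ≤ (1/δ) * (b * Real.log b - b + 1) + (1/δ) * Real.exp (δ * a ^ 2) := by
      have := mul_le_mul_of_nonneg_left h1 hδ'
      have hd : (1/δ) * ((δ * a) * b) = a * b := by field_simp
      nlinarith
    have : a * |b - 1| ≤ a * (b + 1) := mul_le_mul_of_nonneg_left habs ha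
    nlinarith
  · simp only [if_neg hca]
    push_neg at hca
    have key : a * |b - 1| ≤ a ^ 2 + (b * Real.log b - b + 1) := by
      rcases le_or_gt 1 b with hcb | hcb
      · rw [abs_of_nonneg (by linarith)]
        have h1 : a * b ≤ (b * Real.log b - b + 1) + (Real.exp a - 1) := dual_ineq _ _ hb
        have h2 := exp_sub_bound a ha hca.le
        nlinarith
      · rw [abs_of_nonpos (by linarith)]
        have h1 : (-a) * b ≤ (b * Real.log b - b + 1) + (Real.exp (-a) - 1) := dual_ineq _ _ hb
        have h2 : Real.exp (-a) - 1 - (-a) ≤ (-a) ^ 2 := by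
          have hx : |(-a)| ≤ 1 := by rw [abs_neg, abs_of_nonneg ha]; exact hca.le
          have hb2 := Real.exp_bound hx (n := 2) (by norm_num)
          simp [Finset.sum_range_succ] at hb2
          rw [abs_le] at hb2
          have : |(-a)| ^ 2 = a ^ 2 := by rw [abs_neg, sq_abs]
          nlinarith [hb2.2]
        nlinarith
    nlinarith [Real.exp_pos (δ * a ^ 2)]

theorem stmt_1
    {𝕏 : Type*} [TopologicalSpace 𝕏] [PolishSpace 𝕏] [LocallyCompactSpace 𝕏]
    [MeasurableSpace 𝕏] [BorelSpace 𝕏]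
    (T : ℝ) (hT : 0 < T)
    (ν : Measure 𝕏) [SigmaFinite ν] (hνK : ∀ Kc : Set 𝕏, IsCompact Kc → ν Kc < ⊤)
    (νT : Measure (ℝ × 𝕏)) (hνT : νT = (volume.restrict (Set.Icc 0 T)).prod ν)
    (N : ℕ)
    (h : ℝ × 𝕏 → ℝ) (hm : Measurable h) (hnn : ∀ q, 0 ≤ h q)
    (hH2 : ∃ δ : ℝ, 0 < δ ∧ ∀ Γ : Set (ℝ × 𝕏), MeasurableSet Γ → νT Γ < ⊤ →
        ∫⁻ q in Γ, ENNReal.ofReal (Real.exp (δ * h q ^ (2 : ℝ))) ∂νT < ⊤)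
    (hint : ∫⁻ q, ENNReal.ofReal (h q ^ 2) ∂νT < ⊤) :
    (⨆ g ∈ {g : ℝ × 𝕏 → ℝ | Measurable g ∧ (∀ q, 0 ≤ g q) ∧
        ∫⁻ q, ENNReal.ofReal (g q * Real.log (g q) - g q + 1) ∂νT ≤ (N : ℝ≥0∞)},
      ∫⁻ q, ENNReal.ofReal (h q * |g q - 1|) ∂νT) < ⊤ := by
  obtain ⟨δ, hδ, hE⟩ := hH2
  have hδ' : (0:ℝ) ≤ 1/δ := by positivity
  have hrpow : ∀ x : ℝ, x ^ (2:ℝ) = x ^ 2 := fun x => by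
    rw [show (2:ℝ) = ((2:ℕ):ℝ) by norm_num, Real.rpow_natCast]
  set Γ : Set (ℝ × 𝕏) := {q | 1 ≤ h q} with hΓdef
  have hΓm : MeasurableSet Γ := measurableSet_le measurable_const hm
  have hΓfin : νT Γ < ⊤ := by
    have h1 : νT Γ = ∫⁻ _ in Γ, 1 ∂νT := (setLIntegral_one Γ).symm
    have h2 : ∫⁻ _ in Γ, 1 ∂νT ≤ ∫⁻ q in Γ, ENNReal.ofReal (h q ^ 2) ∂νT := by
      apply setLIntegral_mono' hΓm
      intro q hq
      have hq' : (1:ℝ) ≤ h q := hq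
      have : (1:ℝ) ≤ h q ^ 2 := by nlinarith [hnn q]
      calc (1:ℝ≥0∞) = ENNReal.ofReal 1 := by simp
        _ ≤ ENNReal.ofReal (h q ^ 2) := ENNReal.ofReal_le_ofReal this
    exact lt_of_le_of_lt (h1 ▸ h2.trans (setLIntegral_le_lintegral _ _)) hint
  have hEfin : ∫⁻ q in Γ, ENNReal.ofReal (Real.exp (δ * h q ^ 2)) ∂νT < ⊤ := by
    have := hE Γ hΓm hΓfin
    simpa [hrpow] using this
  -- the dominating function
  set F : (ℝ × 𝕏) → ℝ≥0∞ := fun q =>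
    ENNReal.ofReal (h q ^ 2) +
      Γ.indicator (fun q => ENNReal.ofReal ((1/δ) * Real.exp (δ * h q ^ 2))) q with hFdef
  have hFmeas : Measurable F := by
    refine Measurable.add (f := fun q => ENNReal.ofReal (h q ^ 2))
      (g := fun q => Γ.indicator (fun q => ENNReal.ofReal ((1/δ) * Real.exp (δ * h q ^ 2))) q) ?_ ?_
    · exact (hm.pow_const 2).ennreal_ofReal
    · exact ((((hm.pow_const 2).const_mul δ).exp).const_mul (1/δ)).ennreal_ofReal.indicator hΓm
  have hFfin : ∫⁻ q, F q ∂νT < ⊤ := by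
    rw [hFdef]
    rw [lintegral_add_left ((hm.pow_const 2).ennreal_ofReal)]
    apply ENNReal.add_lt_top.mpr
    refine ⟨hint, ?_⟩
    rw [lintegral_indicator hΓm]
    have heq : ∀ q, ENNReal.ofReal ((1/δ) * Real.exp (δ * h q ^ 2)) =
        ENNReal.ofReal (1/δ) * ENNReal.ofReal (Real.exp (δ * h q ^ 2)) := fun q =>
      ENNReal.ofReal_mul hδ'
    simp only [heq]
    rw [lintegral_const_mul' _ _ ENNReal.ofReal_ne_top]
    exact ENNReal.mul_lt_top ENNReal.ofReal_lt_top hEfin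
  have hMfin : (∫⁻ q, F q ∂νT) + ENNReal.ofReal (1 + 1/δ) * (N : ℝ≥0∞) < ⊤ :=
    ENNReal.add_lt_top.mpr ⟨hFfin,
      ENNReal.mul_lt_top ENNReal.ofReal_lt_top (ENNReal.natCast_lt_top N)⟩
  refine lt_of_le_of_lt (iSup₂_le fun g hg => ?_) hMfin
  obtain ⟨hgm, hgnn, hgl⟩ := hg
  have hlgmeas : Measurable fun q => ENNReal.ofReal (g q * Real.log (g q) - g q + 1) :=
    (((hgm.mul (Real.measurable_log.comp hgm)).sub hgm).add_const 1).ennreal_ofReal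
  have hpt : ∀ q, ENNReal.ofReal (h q * |g q - 1|) ≤
      F q + ENNReal.ofReal (1 + 1/δ) * ENNReal.ofReal (g q * Real.log (g q) - g q + 1) := by
    intro q
    have hk := key_ineq δ (h q) (g q) hδ (hnn q) (hgnn q)
    calc ENNReal.ofReal (h q * |g q - 1|)
        ≤ ENNReal.ofReal ((h q ^ 2 + (1/δ) * Real.exp (δ * h q ^ 2) *
            (if 1 ≤ h q then 1 else 0)) + (1 + 1/δ) * (g q * Real.log (g q) - g q + 1)) :=
          ENNReal.ofReal_le_ofReal hk
      _ ≤ ENNReal.ofReal (h q ^ 2 + (1/δ) * Real.exp (δ * h q ^ 2) *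
            (if 1 ≤ h q then 1 else 0)) +
          ENNReal.ofReal ((1 + 1/δ) * (g q * Real.log (g q) - g q + 1)) :=
          ENNReal.ofReal_add_le
      _ ≤ F q + ENNReal.ofReal (1 + 1/δ) * ENNReal.ofReal (g q * Real.log (g q) - g q + 1) := by
          gcongr
          · by_cases hq : 1 ≤ h q
            · have hqm : q ∈ Γ := hq
              rw [hFdef]
              simp only [Set.indicator_of_mem hqm, if_pos hq, mul_one]
              exact ENNReal.ofReal_add_le
            · have hqm : q ∉ Γ := hq
              rw [hFdef]
              simp only [Set.indicator_of_notMem hqm, if_neg hq, mul_zero, add_zero]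
              exact le_rfl
          · exact le_of_eq (ENNReal.ofReal_mul (by positivity))
  calc ∫⁻ q, ENNReal.ofReal (h q * |g q - 1|) ∂νT
      ≤ ∫⁻ q, (F q + ENNReal.ofReal (1 + 1/δ) *
          ENNReal.ofReal (g q * Real.log (g q) - g q + 1)) ∂νT := lintegral_mono hpt
    _ = (∫⁻ q, F q ∂νT) + ∫⁻ q, ENNReal.ofReal (1 + 1/δ) *
          ENNReal.ofReal (g q * Real.log (g q) - g q + 1) ∂νT :=
        lintegral_add_left hFmeas _
    _ = (∫⁻ q, F q ∂νT) + ENNReal.ofReal (1 + 1/δ) *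
          ∫⁻ q, ENNReal.ofReal (g q * Real.log (g q) - g q + 1) ∂νT := by
        rw [lintegral_const_mul' _ _ ENNReal.ofReal_ne_top]
    _ ≤ (∫⁻ q, F q ∂νT) + ENNReal.ofReal (1 + 1/δ) * (N : ℝ≥0∞) := by
        gcongr
end

section
/- Let h:𝕏_T→ℝ be measurable with ∫_{𝕏_T}|h(s,x)|² ν_T(ds,dx)<∞, and suppose that for every δ>0 and every measurable E⊆𝕏_T with ν_T(E)<∞ one has ∫_E exp(δ|h(s,x)|) ν_T(ds,dx)<∞. Fix N∈ℕ, and let g_n,g∈S^N be such that ∫_{𝕏_T} φ(s,x)·g_n(s,x) ν_T(ds,dx) → ∫_{𝕏_T} φ(s,x)·g(s,x) ν_T(ds,dx) as n→∞ for every continuous compactly supported φ:𝕏_T→ℝ. Then lim_{n→∞} ∫_{𝕏_T} h(s,x)·(g_n(s,x)−1) ν_T(ds,dx) = ∫_{𝕏_T} h(s,x)·(g(s,x)−1) ν_T(ds,dx). -/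
set_option maxHeartbeats 1000000

open MeasureTheory Real Filter
open scoped ENNReal

section Aux
variable {α : Type*} [MeasurableSpace α] {μ : Measure α}

lemma two_mul_le_exp_sub {s : ℝ} (hs : 0 ≤ s) : 2 * s ≤ exp s - exp (-s) := by
  have := Real.self_le_sinh_iff.mpr hs
  rw [Real.sinh_eq] at this
  linarith

lemma ent_nonneg {x : ℝ} (hx : 0 ≤ x) : 0 ≤ x * Real.log x - x + 1 := by
  rcases eq_or_lt_of_le hx with h | hx'
  · simp [← h]
  · have h1 := Real.log_le_sub_one_of_pos (show (0:ℝ) < x⁻¹ by positivity)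
    rw [Real.log_inv] at h1
    have h2 : x * (x⁻¹ - 1) ≥ x * (-Real.log x) :=
      mul_le_mul_of_nonneg_left h1 hx'.le
    have h3 : x * x⁻¹ = 1 := mul_inv_cancel₀ hx'.ne'
    nlinarith

lemma key_ineq_s2 {s x : ℝ} (hs : 0 ≤ s) (hx : 0 ≤ x) :
    s * |x - 1| ≤ (exp s - s - 1) + (x * Real.log x - x + 1) := by
  rcases eq_or_lt_of_le hx with h0 | hx
  · have h2 := two_mul_le_exp_sub hs
    have h3 := (Real.exp_pos (-s)).le
    rw [← h0]
    norm_num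
    linarith
  rcases le_total 1 x with hx1 | hx1
  · rw [abs_of_nonneg (by linarith)]
    have h1 := Real.add_one_le_exp (s - Real.log x)
    rw [Real.exp_sub, Real.exp_log hx] at h1
    have h2 : (s - Real.log x + 1) * x ≤ exp s := (le_div_iff₀ hx).mp h1
    nlinarith
  · rw [abs_of_nonpos (by linarith)]
    have h1 := Real.add_one_le_exp (-s - Real.log x)
    rw [Real.exp_sub, Real.exp_neg, Real.exp_log hx] at h1
    have h2 : (-s - Real.log x + 1) * x ≤ (exp s)⁻¹ := (le_div_iff₀ hx).mp h1
    have h3 := two_mul_le_exp_sub hs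
    rw [Real.exp_neg] at h3
    nlinarith

lemma exp_sub_nonneg {s : ℝ} : 0 ≤ exp s - s - 1 := by
  have := Real.add_one_le_exp s; linarith

lemma exp_sub_le_sq {s : ℝ} (hs : 0 ≤ s) (hs1 : s ≤ 1) : exp s - s - 1 ≤ s ^ 2 := by
  have h := Real.exp_bound (x := s) (by rw [abs_of_nonneg hs]; exact hs1) (n := 2) (by norm_num)
  simp [Finset.sum_range_succ] at h
  rw [abs_le] at h
  nlinarith [h.2]

lemma exp_sub_le_lin {s : ℝ} (hs : 0 ≤ s) : exp s - s - 1 ≤ s * exp s := by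
  have h1 := Real.add_one_le_exp (-s)
  have h2 : exp (-s) * exp s = 1 := by rw [← Real.exp_add]; simp
  nlinarith [Real.exp_pos s]

/-- The master duality estimate, in `ℝ≥0∞`. -/
lemma master {f g : α → ℝ} (hf : Measurable f) (hg0 : ∀ q, 0 ≤ g q)
    {N : ℝ≥0∞} (hN : ∫⁻ q, ENNReal.ofReal (g q * Real.log (g q) - g q + 1) ∂μ ≤ N)
    {δ : ℝ} (hδ : 0 < δ) {s : Set α} :
    ∫⁻ q in s, ENNReal.ofReal (|f q| * |g q - 1|) ∂μ ≤
      ENNReal.ofReal δ⁻¹ *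
        ((∫⁻ q in s, ENNReal.ofReal (exp (δ * |f q|) - δ * |f q| - 1) ∂μ) + N) := by
  have hpt : ∀ q, ENNReal.ofReal (|f q| * |g q - 1|) ≤
      ENNReal.ofReal δ⁻¹ * (ENNReal.ofReal (exp (δ * |f q|) - δ * |f q| - 1)
        + ENNReal.ofReal (g q * Real.log (g q) - g q + 1)) := by
    intro q
    rw [← ENNReal.ofReal_add exp_sub_nonneg (ent_nonneg (hg0 q)),
      ← ENNReal.ofReal_mul (by positivity)]
    apply ENNReal.ofReal_le_ofReal
    have hk := key_ineq_s2 (s := δ * |f q|) (x := g q) (by positivity) (hg0 q)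
    calc |f q| * |g q - 1| = δ⁻¹ * (δ * |f q| * |g q - 1|) := by field_simp
    _ ≤ δ⁻¹ * ((exp (δ * |f q|) - δ * |f q| - 1) + (g q * Real.log (g q) - g q + 1)) := by
        apply mul_le_mul_of_nonneg_left hk (by positivity)
    _ = _ := by ring
  calc ∫⁻ q in s, ENNReal.ofReal (|f q| * |g q - 1|) ∂μ
      ≤ ∫⁻ q in s, ENNReal.ofReal δ⁻¹ *
          (ENNReal.ofReal (exp (δ * |f q|) - δ * |f q| - 1)
            + ENNReal.ofReal (g q * Real.log (g q) - g q + 1)) ∂μ :=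
        lintegral_mono fun q => hpt q
    _ = ENNReal.ofReal δ⁻¹ * ((∫⁻ q in s, ENNReal.ofReal (exp (δ * |f q|) - δ * |f q| - 1) ∂μ)
          + ∫⁻ q in s, ENNReal.ofReal (g q * Real.log (g q) - g q + 1) ∂μ) := by
        rw [lintegral_const_mul' _ _ ENNReal.ofReal_ne_top, lintegral_add_left]
        exact (((Real.measurable_exp.comp (hf.abs.const_mul δ)).sub
          (hf.abs.const_mul δ)).sub measurable_const).ennreal_ofReal
    _ ≤ _ := by
        gcongr
        exact (setLIntegral_le_lintegral _ _).trans hN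

lemma integrable_of_lint {F : α → ℝ} (hFm : AEStronglyMeasurable F μ)
    (h : ∫⁻ q, ENNReal.ofReal |F q| ∂μ < ⊤) : Integrable F μ := by
  refine ⟨hFm, ?_⟩
  rw [hasFiniteIntegral_iff_norm]
  simpa only [Real.norm_eq_abs] using h

lemma abs_integral_le {F : α → ℝ} {B : ℝ≥0∞} (hB : ∫⁻ q, ENNReal.ofReal |F q| ∂μ ≤ B)
    (hBt : B ≠ ⊤) : |∫ q, F q ∂μ| ≤ B.toReal := by
  have h1 := MeasureTheory.norm_integral_le_lintegral_norm (μ := μ) F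
  simp only [Real.norm_eq_abs] at h1
  exact h1.trans (ENNReal.toReal_mono hBt hB)

lemma tail_small {f : α → ℝ≥0∞} {s : ℕ → Set α} (hs : ∀ n, MeasurableSet (s n))
    (hanti : Antitone s) (hfin : ∫⁻ q in s 0, f q ∂μ < ⊤)
    (hzero : ∫⁻ q in ⋂ n, s n, f q ∂μ = 0) {ε : ℝ≥0∞} (hε : 0 < ε) :
    ∃ n, ∫⁻ q in s n, f q ∂μ ≤ ε := by
  set ρ := μ.withDensity f with hρ
  have happ : ∀ t : Set α, MeasurableSet t → ρ t = ∫⁻ q in t, f q ∂μ := fun t ht =>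
    withDensity_apply f ht
  have htend : Tendsto (fun n => ρ (s n)) atTop (nhds (ρ (⋂ n, s n))) :=
    MeasureTheory.tendsto_measure_iInter_atTop (fun n => (hs n).nullMeasurableSet) hanti
      ⟨0, by rw [happ _ (hs 0)]; exact hfin.ne⟩
  rw [happ _ (MeasurableSet.iInter hs), hzero] at htend
  rcases (htend.eventually (gt_mem_nhds hε)).exists with ⟨n, hn⟩
  exact ⟨n, by rw [← happ _ (hs n)]; exact hn.le⟩

lemma meas_gt_lt_top {f : α → ℝ} (hf : Measurable f)
    (hL2 : ∫⁻ q, ENNReal.ofReal (|f q| ^ 2) ∂μ < ⊤) {η : ℝ} (hη : 0 < η) :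
    μ {q | η < |f q|} < ⊤ := by
  have hsub : {q | η < |f q|} ⊆ {q | ENNReal.ofReal (η ^ 2) ≤ ENNReal.ofReal (|f q| ^ 2)} := by
    intro q hq
    exact ENNReal.ofReal_le_ofReal (by nlinarith [Set.mem_setOf_eq ▸ hq, abs_nonneg (f q)])
  refine lt_of_le_of_lt (measure_mono hsub) ?_
  refine lt_of_le_of_lt (meas_ge_le_lintegral_div (hf.abs.pow_const 2).ennreal_ofReal.aemeasurable
    (by simp [hη.le]; positivity) ENNReal.ofReal_ne_top) ?_
  exact ENNReal.div_lt_top hL2.ne (by simp [hη.le]; positivity)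

lemma clamp_abs {M a b : ℝ} (hb : |b| ≤ M) : |b - max (-M) (min M a)| ≤ |b - a| := by
  rw [abs_le] at hb
  rcases le_total M a with h1 | h1
  · rw [min_eq_left h1, max_eq_right (by linarith)]
    rw [abs_of_nonpos (by linarith), abs_of_nonpos (by linarith)]
    linarith
  · rcases le_total a (-M) with h2 | h2
    · rw [min_eq_right h1, max_eq_left h2]
      rw [abs_of_nonneg (by linarith), abs_of_nonneg (by linarith)]
      linarith
    · rw [min_eq_right h1, max_eq_right h2]

end Aux

theorem stmt_2
    {𝕏 : Type*} [TopologicalSpace 𝕏] [PolishSpace 𝕏] [LocallyCompactSpace 𝕏]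
    [MeasurableSpace 𝕏] [BorelSpace 𝕏]
    (T : ℝ) (hT : 0 < T)
    (ν : Measure 𝕏) [SigmaFinite ν] (hνK : ∀ Kc : Set 𝕏, IsCompact Kc → ν Kc < ⊤)
    (νT : Measure (ℝ × 𝕏)) (hνT : νT = (volume.restrict (Set.Icc 0 T)).prod ν)
    (h : ℝ × 𝕏 → ℝ) (hm : Measurable h)
    (hL2 : ∫⁻ q, ENNReal.ofReal (|h q| ^ 2) ∂νT < ⊤)
    (hexp : ∀ δ : ℝ, 0 < δ → ∀ E : Set (ℝ × 𝕏), MeasurableSet E → νT E < ⊤ →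
        ∫⁻ q in E, ENNReal.ofReal (Real.exp (δ * |h q|)) ∂νT < ⊤)
    (N : ℕ) (gn : ℕ → ℝ × 𝕏 → ℝ) (g : ℝ × 𝕏 → ℝ)
    (hgn : ∀ n, gn n ∈ {g : ℝ × 𝕏 → ℝ | Measurable g ∧ (∀ q, 0 ≤ g q) ∧
        ∫⁻ q, ENNReal.ofReal (g q * Real.log (g q) - g q + 1) ∂νT ≤ (N : ℝ≥0∞)})
    (hg : g ∈ {g : ℝ × 𝕏 → ℝ | Measurable g ∧ (∀ q, 0 ≤ g q) ∧
        ∫⁻ q, ENNReal.ofReal (g q * Real.log (g q) - g q + 1) ∂νT ≤ (N : ℝ≥0∞)})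
    (hconv : ∀ φ : ℝ × 𝕏 → ℝ, Continuous φ → HasCompactSupport φ →
        Tendsto (fun n => ∫ q, φ q * gn n q ∂νT) atTop (nhds (∫ q, φ q * g q ∂νT))) :
    Tendsto (fun n => ∫ q, h q * (gn n q - 1) ∂νT) atTop
      (nhds (∫ q, h q * (g q - 1) ∂νT)) := by
  classical
  -- regularity instances
  haveI : IsFiniteMeasureOnCompacts νT := by
    constructor
    intro K hK
    have h1 : K ⊆ (Prod.fst '' K) ×ˢ (Prod.snd '' K) := fun q hq =>
      ⟨Set.mem_image_of_mem _ hq, Set.mem_image_of_mem _ hq⟩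
    calc νT K ≤ νT ((Prod.fst '' K) ×ˢ (Prod.snd '' K)) := measure_mono h1
      _ = (volume.restrict (Set.Icc 0 T)) (Prod.fst '' K) * ν (Prod.snd '' K) := by
          rw [hνT]; exact Measure.prod_prod _ _
      _ < ⊤ := by
          apply ENNReal.mul_lt_top
          · exact lt_of_le_of_lt (Measure.restrict_apply_le _ _)
              (hK.image continuous_fst).measure_lt_top
          · exact hνK _ (hK.image continuous_snd)
  haveI : νT.Regular := inferInstance
  obtain ⟨hgm, hg0, hgN⟩ := hg
  have hEm : ∀ δ : ℝ, Measurable fun q => ENNReal.ofReal (exp (δ * |h q|) - δ * |h q| - 1) :=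
    fun δ => (((Real.measurable_exp.comp (hm.abs.const_mul δ)).sub
      (hm.abs.const_mul δ)).sub measurable_const).ennreal_ofReal
  have hG1meas : MeasurableSet {q : ℝ × 𝕏 | 1 < |h q|} := measurableSet_lt measurable_const hm.abs
  have hG1fin : νT {q | 1 < |h q|} < ⊤ := meas_gt_lt_top hm hL2 one_pos
  -- finiteness of the whole-space dual integral for δ = 1
  have hK1 : ∫⁻ q, ENNReal.ofReal (exp (1 * |h q|) - 1 * |h q| - 1) ∂νT < ⊤ := by
    rw [← lintegral_add_compl _ hG1meas]
    apply ENNReal.add_lt_top.mpr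
    constructor
    · refine lt_of_le_of_lt (setLIntegral_mono (hm.abs.const_mul 1).exp.ennreal_ofReal
        fun q _ => ?_) (hexp 1 one_pos _ hG1meas hG1fin)
      exact ENNReal.ofReal_le_ofReal (by nlinarith [abs_nonneg (h q)])
    · refine lt_of_le_of_lt (setLIntegral_mono (hm.abs.pow_const 2).ennreal_ofReal
        fun q hq => ?_) (lt_of_le_of_lt (setLIntegral_le_lintegral _ _) hL2)
      have hq1 : |h q| ≤ 1 := by simpa using hq
      refine ENNReal.ofReal_le_ofReal ?_
      have := exp_sub_le_sq (s := 1 * |h q|) (by positivity) (by simpa using hq1)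
      nlinarith [abs_nonneg (h q)]
  -- integrability of h * (G - 1)
  have habs : ∀ G : ℝ × 𝕏 → ℝ, Measurable G → (∀ q, 0 ≤ G q) →
      (∫⁻ q, ENNReal.ofReal (G q * Real.log (G q) - G q + 1) ∂νT ≤ (N : ℝ≥0∞)) →
      ∫⁻ q, ENNReal.ofReal (|h q| * |G q - 1|) ∂νT < ⊤ := by
    intro G hGm hG0 hGN
    have hmm := master (μ := νT) (f := h) hm hG0 hGN one_pos (s := Set.univ)
    rw [Measure.restrict_univ] at hmm
    refine lt_of_le_of_lt hmm (ENNReal.mul_lt_top ENNReal.ofReal_lt_top ?_)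
    exact ENNReal.add_lt_top.mpr ⟨hK1, ENNReal.natCast_lt_top N⟩
  have hHm : ∀ G : ℝ × 𝕏 → ℝ, Measurable G →
      Measurable fun q => ENNReal.ofReal (|h q| * |G q - 1|) :=
    fun G hGm => (hm.abs.mul (hGm.sub measurable_const).abs).ennreal_ofReal
  have hHint : ∀ G : ℝ × 𝕏 → ℝ, Measurable G → (∀ q, 0 ≤ G q) →
      (∫⁻ q, ENNReal.ofReal (G q * Real.log (G q) - G q + 1) ∂νT ≤ (N : ℝ≥0∞)) →
      Integrable (fun q => h q * (G q - 1)) νT := by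
    intro G hGm hG0 hGN
    apply integrable_of_lint (hm.mul (hGm.sub measurable_const)).aestronglyMeasurable
    simpa only [Pi.mul_apply, Pi.sub_apply, abs_mul] using habs G hGm hG0 hGN
  -- the ε-argument
  rw [Metric.tendsto_atTop]
  intro ε hε
  set ε' := ε / 16 with hε'def
  have hε' : 0 < ε' := by positivity
  set δ := max 1 ((N + 1) / ε') with hδdef
  have hδ1 : (1:ℝ) ≤ δ := le_max_left _ _
  have hδ0 : (0:ℝ) < δ := lt_of_lt_of_le one_pos hδ1
  have hNδ : (N : ℝ) ≤ δ * ε' := by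
    have h1 : (N + 1) / ε' ≤ δ := le_max_right _ _
    rw [div_le_iff₀ hε'] at h1
    nlinarith
  have hfact : ENNReal.ofReal δ⁻¹ * (ENNReal.ofReal (δ * ε') + (N : ℝ≥0∞)) ≤
      ENNReal.ofReal (2 * ε') := by
    have hN' : (N : ℝ≥0∞) ≤ ENNReal.ofReal (δ * ε') := by
      rw [← ENNReal.ofReal_natCast N]
      exact ENNReal.ofReal_le_ofReal hNδ
    calc ENNReal.ofReal δ⁻¹ * (ENNReal.ofReal (δ * ε') + (N : ℝ≥0∞))
        ≤ ENNReal.ofReal δ⁻¹ * (ENNReal.ofReal (δ * ε') + ENNReal.ofReal (δ * ε')) := by gcongr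
      _ = ENNReal.ofReal (δ⁻¹ * (δ * ε' + δ * ε')) := by
          rw [← ENNReal.ofReal_add (by positivity) (by positivity),
            ← ENNReal.ofReal_mul (by positivity)]
      _ = ENNReal.ofReal (2 * ε') := by
          congr 1
          field_simp
          ring
  -- choice of M
  have hexpδ : ∫⁻ q in {q | 1 < |h q|}, ENNReal.ofReal (exp (δ * |h q|)) ∂νT < ⊤ :=
    hexp δ hδ0 _ hG1meas hG1fin
  obtain ⟨M, hM⟩ : ∃ M : ℕ, ∫⁻ q in {q | 1 + (M:ℝ) < |h q|},
      ENNReal.ofReal (exp (δ * |h q|)) ∂νT ≤ ENNReal.ofReal (δ * ε') := by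
    apply tail_small (μ := νT) (s := fun k => {q | 1 + (k:ℝ) < |h q|})
      (fun k => measurableSet_lt measurable_const hm.abs)
    · intro i j hij q hq
      have : (i:ℝ) ≤ (j:ℝ) := Nat.cast_le.mpr hij
      simp only [Set.mem_setOf_eq] at hq ⊢
      linarith
    · refine lt_of_le_of_lt (lintegral_mono_set ?_) hexpδ
      intro q hq
      simp only [Set.mem_setOf_eq] at hq ⊢
      norm_num at hq
      exact hq
    · have hempty : (⋂ k : ℕ, {q : ℝ × 𝕏 | 1 + (k:ℝ) < |h q|}) = ∅ := by
        apply Set.eq_empty_iff_forall_notMem.mpr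
        intro q hq
        obtain ⟨k, hk⟩ := exists_nat_gt (|h q|)
        have := Set.mem_iInter.mp hq k
        simp only [Set.mem_setOf_eq] at this
        linarith
      rw [hempty]
      simp
    · exact ENNReal.ofReal_pos.mpr (by positivity)
  set Mr := 1 + (M : ℝ) with hMrdef
  have hMr1 : (1:ℝ) ≤ Mr := by rw [hMrdef]; nlinarith [Nat.cast_nonneg (α := ℝ) M]
  have hMr0 : (0:ℝ) ≤ Mr := by linarith
  set A₁ := {q : ℝ × 𝕏 | Mr < |h q|} with hA₁def
  have hA₁meas : MeasurableSet A₁ := measurableSet_lt measurable_const hm.abs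
  have hT1 : ∫⁻ q in A₁, ENNReal.ofReal (exp (δ * |h q|) - δ * |h q| - 1) ∂νT ≤
      ENNReal.ofReal (δ * ε') := by
    refine le_trans (setLIntegral_mono (hm.abs.const_mul δ).exp.ennreal_ofReal
      fun q _ => ?_) hM
    refine ENNReal.ofReal_le_ofReal ?_
    nlinarith [abs_nonneg (h q), hδ0.le, mul_nonneg hδ0.le (abs_nonneg (h q))]
  -- choice of η
  obtain ⟨k₀, hk₀⟩ : ∃ k : ℕ, ∫⁻ q in {q | |h q| ≤ 1/((k:ℝ)+1)},
      ENNReal.ofReal (|h q| ^ 2) ∂νT ≤ ENNReal.ofReal (ε' / δ) := by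
    apply tail_small (μ := νT) (s := fun k => {q | |h q| ≤ 1/((k:ℝ)+1)})
      (fun k => measurableSet_le hm.abs measurable_const)
    · intro i j hij q hq
      have h1 : (i:ℝ) ≤ (j:ℝ) := Nat.cast_le.mpr hij
      simp only [Set.mem_setOf_eq] at hq ⊢
      have h2 : 1/((j:ℝ)+1) ≤ 1/((i:ℝ)+1) := by
        apply one_div_le_one_div_of_le (by positivity)
        linarith
      linarith
    · exact lt_of_le_of_lt (setLIntegral_le_lintegral _ _) hL2
    · have hzero : ∀ q ∈ ⋂ k : ℕ, {q : ℝ × 𝕏 | |h q| ≤ 1/((k:ℝ)+1)},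
          ENNReal.ofReal (|h q| ^ 2) = 0 := by
        intro q hq
        have hq0 : |h q| ≤ 0 := by
          by_contra hc
          push_neg at hc
          obtain ⟨k, hk⟩ := exists_nat_one_div_lt hc
          have := Set.mem_iInter.mp hq k
          simp only [Set.mem_setOf_eq] at this
          linarith
        have : h q = 0 := abs_nonpos_iff.mp hq0
        simp [this]
      rw [setLIntegral_congr_fun (MeasurableSet.iInter fun k =>
        measurableSet_le hm.abs measurable_const) hzero]
      simp
    · exact ENNReal.ofReal_pos.mpr (by positivity)
  set k₁ := max k₀ ⌈δ⌉₊ with hk₁def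
  set η := 1/((k₁:ℝ)+1) with hηdef
  have hη0 : (0:ℝ) < η := by positivity
  have hδη : δ * η ≤ 1 := by
    have h1 : δ ≤ (⌈δ⌉₊ : ℝ) := Nat.le_ceil δ
    have h2 : (⌈δ⌉₊:ℝ) ≤ (k₁:ℝ) := Nat.cast_le.mpr (le_max_right _ _)
    rw [hηdef, mul_one_div, div_le_one (by positivity)]
    linarith
  set A₃ := {q : ℝ × 𝕏 | |h q| ≤ η} with hA₃def
  have hA₃meas : MeasurableSet A₃ := measurableSet_le hm.abs measurable_const
  have hηtail : ∫⁻ q in A₃, ENNReal.ofReal (|h q| ^ 2) ∂νT ≤ ENNReal.ofReal (ε' / δ) := by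
    refine le_trans (lintegral_mono_set ?_) hk₀
    intro q hq
    simp only [hA₃def, Set.mem_setOf_eq] at hq ⊢
    have h2 : η ≤ 1/((k₀:ℝ)+1) := by
      rw [hηdef]
      apply one_div_le_one_div_of_le (by positivity)
      have : (k₀:ℝ) ≤ (k₁:ℝ) := Nat.cast_le.mpr (le_max_left k₀ ⌈δ⌉₊)
      linarith
    linarith
  have hT3 : ∫⁻ q in A₃, ENNReal.ofReal (exp (δ * |h q|) - δ * |h q| - 1) ∂νT ≤
      ENNReal.ofReal (δ * ε') := by
    have step1 : ∫⁻ q in A₃, ENNReal.ofReal (exp (δ * |h q|) - δ * |h q| - 1) ∂νT ≤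
        ∫⁻ q in A₃, ENNReal.ofReal (δ^2) * ENNReal.ofReal (|h q| ^ 2) ∂νT := by
      refine setLIntegral_mono ((hm.abs.pow_const 2).ennreal_ofReal.const_mul _) fun q hq => ?_
      rw [← ENNReal.ofReal_mul (by positivity)]
      refine ENNReal.ofReal_le_ofReal ?_
      have hq1 : |h q| ≤ η := hq
      have hs1 : δ * |h q| ≤ 1 := by
        nlinarith [abs_nonneg (h q), hδ0.le]
      have := exp_sub_le_sq (s := δ * |h q|) (by positivity) hs1
      nlinarith [abs_nonneg (h q)]
    refine le_trans step1 ?_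
    rw [lintegral_const_mul' _ _ ENNReal.ofReal_ne_top]
    refine le_trans (mul_le_mul_right hηtail _) ?_
    rw [← ENNReal.ofReal_mul (by positivity)]
    refine ENNReal.ofReal_le_ofReal (le_of_eq ?_)
    field_simp
  -- uniform small bound over A₁ and A₃
  have hA13 : ∀ s : Set (ℝ × 𝕏),
      (∫⁻ q in s, ENNReal.ofReal (exp (δ * |h q|) - δ * |h q| - 1) ∂νT ≤ ENNReal.ofReal (δ * ε')) →
      ∀ G : ℝ × 𝕏 → ℝ, (∀ q, 0 ≤ G q) →
      (∫⁻ q, ENNReal.ofReal (G q * Real.log (G q) - G q + 1) ∂νT ≤ (N : ℝ≥0∞)) →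
      ∫⁻ q in s, ENNReal.ofReal (|h q| * |G q - 1|) ∂νT ≤ ENNReal.ofReal (2 * ε') := by
    intro s hs G hG0 hGN
    refine le_trans (master (μ := νT) (f := h) hm hG0 hGN hδ0) (le_trans ?_ hfact)
    gcongr
  -- the middle set and truncated h
  set A₂ := (A₁ ∪ A₃)ᶜ with hA₂def
  have hA₂meas : MeasurableSet A₂ := (hA₁meas.union hA₃meas).compl
  have hA₂h : ∀ q ∈ A₂, |h q| ≤ Mr := by
    intro q hq
    rw [hA₂def, Set.mem_compl_iff, Set.mem_union, hA₁def, hA₃def,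
      Set.mem_setOf_eq, Set.mem_setOf_eq] at hq
    push_neg at hq
    exact hq.1
  have hA₂sub : A₂ ⊆ {q | η < |h q|} := by
    intro q hq
    rw [hA₂def, Set.mem_compl_iff, Set.mem_union, hA₁def, hA₃def,
      Set.mem_setOf_eq, Set.mem_setOf_eq] at hq
    push_neg at hq
    exact hq.2
  have hA₂fin : νT A₂ < ⊤ :=
    lt_of_le_of_lt (measure_mono hA₂sub) (meas_gt_lt_top hm hL2 hη0)
  set h₂ := A₂.indicator h with hh₂def
  have hh₂m : Measurable h₂ := hm.indicator hA₂meas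
  have hh₂bd : ∀ q, |h₂ q| ≤ Mr := by
    intro q
    rw [hh₂def]
    by_cases hq : q ∈ A₂
    · rw [Set.indicator_of_mem hq]; exact hA₂h q hq
    · rw [Set.indicator_of_notMem hq]; simpa using hMr0
  have hh₂lint : ∫⁻ q, ENNReal.ofReal |h₂ q| ∂νT < ⊤ := by
    have heq : (fun q => ENNReal.ofReal |h₂ q|) =
        A₂.indicator fun q => ENNReal.ofReal |h q| := by
      funext q
      by_cases hq : q ∈ A₂ <;>
        simp [hh₂def, Set.indicator_of_mem, Set.indicator_of_notMem, hq]
    rw [heq, lintegral_indicator hA₂meas]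
    refine lt_of_le_of_lt (setLIntegral_mono measurable_const fun q hq =>
      ENNReal.ofReal_le_ofReal (hA₂h q hq)) ?_
    rw [setLIntegral_const]
    exact ENNReal.mul_lt_top ENNReal.ofReal_lt_top hA₂fin
  have hh₂int : Integrable h₂ νT := integrable_of_lint hh₂m.aestronglyMeasurable hh₂lint
  -- continuous compactly supported approximation
  obtain ⟨φ₀, hφ₀supp, hφ₀close, hφ₀cont, _⟩ :=
    hh₂int.exists_hasCompactSupport_lintegral_sub_le
      (ε := ENNReal.ofReal (ε' * exp (-(2 * Mr * δ))))
      (ENNReal.ofReal_pos.mpr (by positivity)).ne'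
  set φ : ℝ × 𝕏 → ℝ := fun q => max (-Mr) (min Mr (φ₀ q)) with hφdef
  have hφcont : Continuous φ := continuous_const.max (continuous_const.min hφ₀cont)
  have hφsupp : HasCompactSupport φ := by
    have h0 : (fun x : ℝ => max (-Mr) (min Mr x)) 0 = 0 := by
      simp only [min_eq_right hMr0, max_eq_right (neg_nonpos.mpr hMr0)]
    exact hφ₀supp.comp_left (g := fun x : ℝ => max (-Mr) (min Mr x)) h0
  have hφm : Measurable φ := hφcont.measurable
  have hφbd : ∀ q, |φ q| ≤ Mr := by
    intro q
    rw [abs_le]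
    constructor
    · exact le_max_left _ _
    · exact max_le (by linarith) (min_le_left _ _)
  set ψ : ℝ × 𝕏 → ℝ := fun q => h₂ q - φ q with hψdef
  have hψm : Measurable ψ := hh₂m.sub hφm
  have hψbd : ∀ q, |ψ q| ≤ 2 * Mr := by
    intro q
    refine le_trans (abs_sub _ _) ?_
    have := hh₂bd q; have := hφbd q; linarith
  have hψclose : ∫⁻ q, ENNReal.ofReal |ψ q| ∂νT ≤ ENNReal.ofReal (ε' * exp (-(2 * Mr * δ))) := by
    have hφ₀close' : ∫⁻ q, ENNReal.ofReal |h₂ q - φ₀ q| ∂νT ≤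
        ENNReal.ofReal (ε' * exp (-(2 * Mr * δ))) := by
      simpa only [Real.enorm_eq_ofReal_abs] using hφ₀close
    exact le_trans (lintegral_mono fun q =>
      ENNReal.ofReal_le_ofReal (clamp_abs (hh₂bd q))) hφ₀close'
  have hψsmall : ∫⁻ q, ENNReal.ofReal |ψ q| ∂νT ≤ ENNReal.ofReal ε' := by
    refine le_trans hψclose (ENNReal.ofReal_le_ofReal ?_)
    have hexple : exp (-(2 * Mr * δ)) ≤ 1 := Real.exp_le_one_iff.mpr (by nlinarith)
    nlinarith
  -- key estimate: ∫ |ψ| G is small, uniformly over the entropy ball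
  have hestψ : ∀ G : ℝ × 𝕏 → ℝ, Measurable G → (∀ q, 0 ≤ G q) →
      (∫⁻ q, ENNReal.ofReal (G q * Real.log (G q) - G q + 1) ∂νT ≤ (N : ℝ≥0∞)) →
      ∫⁻ q, ENNReal.ofReal (|ψ q| * G q) ∂νT ≤ ENNReal.ofReal (3 * ε') := by
    intro G hGm hG0 hGN
    have hpt : ∀ q, ENNReal.ofReal (|ψ q| * G q) ≤
        ENNReal.ofReal (|ψ q| * |G q - 1|) + ENNReal.ofReal |ψ q| := by
      intro q
      rw [← ENNReal.ofReal_add (by positivity) (abs_nonneg _)]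
      refine ENNReal.ofReal_le_ofReal ?_
      have h1 : G q ≤ |G q - 1| + 1 := by linarith [le_abs_self (G q - 1)]
      nlinarith [abs_nonneg (ψ q), hG0 q, abs_nonneg (G q - 1)]
    have hEψ : ∫⁻ q, ENNReal.ofReal (exp (δ * |ψ q|) - δ * |ψ q| - 1) ∂νT ≤
        ENNReal.ofReal (δ * ε') := by
      have hptψ : ∀ q, ENNReal.ofReal (exp (δ * |ψ q|) - δ * |ψ q| - 1) ≤
          ENNReal.ofReal (δ * exp (2 * Mr * δ)) * ENNReal.ofReal |ψ q| := by
        intro q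
        rw [← ENNReal.ofReal_mul (by positivity)]
        refine ENNReal.ofReal_le_ofReal ?_
        have h1 : exp (δ * |ψ q|) - δ * |ψ q| - 1 ≤ (δ * |ψ q|) * exp (δ * |ψ q|) :=
          exp_sub_le_lin (by positivity)
        have h2 : exp (δ * |ψ q|) ≤ exp (2 * Mr * δ) :=
          Real.exp_le_exp.mpr (by nlinarith [hψbd q, hδ0.le])
        nlinarith [mul_nonneg hδ0.le (abs_nonneg (ψ q)),
          mul_le_mul_of_nonneg_left h2 (mul_nonneg hδ0.le (abs_nonneg (ψ q)))]
      refine le_trans (lintegral_mono hptψ) ?_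
      rw [lintegral_const_mul' _ _ ENNReal.ofReal_ne_top]
      refine le_trans (mul_le_mul_right hψclose _) ?_
      rw [← ENNReal.ofReal_mul (by positivity)]
      refine ENNReal.ofReal_le_ofReal (le_of_eq ?_)
      rw [Real.exp_neg]
      field_simp
    calc ∫⁻ q, ENNReal.ofReal (|ψ q| * G q) ∂νT
        ≤ ∫⁻ q, (ENNReal.ofReal (|ψ q| * |G q - 1|) + ENNReal.ofReal |ψ q|) ∂νT :=
          lintegral_mono hpt
      _ = (∫⁻ q, ENNReal.ofReal (|ψ q| * |G q - 1|) ∂νT) + ∫⁻ q, ENNReal.ofReal |ψ q| ∂νT :=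
          lintegral_add_left ((hψm.abs.mul (hGm.sub measurable_const).abs).ennreal_ofReal) _
      _ ≤ ENNReal.ofReal (2 * ε') + ENNReal.ofReal ε' := by
          refine add_le_add ?_ hψsmall
          have hmm := master (μ := νT) (f := ψ) hψm hG0 hGN hδ0 (s := Set.univ)
          rw [Measure.restrict_univ] at hmm
          refine le_trans hmm (le_trans ?_ hfact)
          gcongr
      _ = ENNReal.ofReal (3 * ε') := by
          rw [← ENNReal.ofReal_add (by positivity) (by positivity)]
          ring_nf
  -- integrability of the various products
  have hh₂Gint : ∀ G : ℝ × 𝕏 → ℝ, Measurable G → (∀ q, 0 ≤ G q) →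
      (∫⁻ q, ENNReal.ofReal (G q * Real.log (G q) - G q + 1) ∂νT ≤ (N : ℝ≥0∞)) →
      Integrable (fun q => h₂ q * G q) νT := by
    intro G hGm hG0 hGN
    apply integrable_of_lint (hh₂m.mul hGm).aestronglyMeasurable
    have hpt : ∀ q, ENNReal.ofReal |h₂ q * G q| ≤
        ENNReal.ofReal (|h q| * |G q - 1|) + ENNReal.ofReal |h₂ q| := by
      intro q
      rw [← ENNReal.ofReal_add (by positivity) (abs_nonneg _)]
      refine ENNReal.ofReal_le_ofReal ?_
      by_cases hq : q ∈ A₂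
      · rw [hh₂def, Set.indicator_of_mem hq, abs_mul, abs_of_nonneg (hG0 q)]
        have h1 : G q ≤ |G q - 1| + 1 := by linarith [le_abs_self (G q - 1)]
        nlinarith [abs_nonneg (h q), hG0 q]
      · rw [hh₂def, Set.indicator_of_notMem hq]
        simp only [zero_mul, abs_zero]
        positivity
    refine lt_of_le_of_lt (lintegral_mono hpt) ?_
    rw [lintegral_add_left (hHm G hGm)]
    exact ENNReal.add_lt_top.mpr ⟨habs G hGm hG0 hGN, hh₂lint⟩
  have hψGint : ∀ G : ℝ × 𝕏 → ℝ, Measurable G → (∀ q, 0 ≤ G q) →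
      (∫⁻ q, ENNReal.ofReal (G q * Real.log (G q) - G q + 1) ∂νT ≤ (N : ℝ≥0∞)) →
      Integrable (fun q => ψ q * G q) νT := by
    intro G hGm hG0 hGN
    apply integrable_of_lint (hψm.mul hGm).aestronglyMeasurable
    have heq : ∀ q, ENNReal.ofReal |ψ q * G q| = ENNReal.ofReal (|ψ q| * G q) := by
      intro q
      rw [abs_mul, abs_of_nonneg (hG0 q)]
    refine lt_of_le_of_lt (le_of_eq (lintegral_congr heq)) ?_
    exact lt_of_le_of_lt (hestψ G hGm hG0 hGN) ENNReal.ofReal_lt_top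
  have hφGint : ∀ G : ℝ × 𝕏 → ℝ, Measurable G → (∀ q, 0 ≤ G q) →
      (∫⁻ q, ENNReal.ofReal (G q * Real.log (G q) - G q + 1) ∂νT ≤ (N : ℝ≥0∞)) →
      Integrable (fun q => φ q * G q) νT := by
    intro G hGm hG0 hGN
    have heq : (fun q => φ q * G q) = fun q => h₂ q * G q - ψ q * G q := by
      funext q
      rw [hψdef]
      ring
    rw [heq]
    exact (hh₂Gint G hGm hG0 hGN).sub (hψGint G hGm hG0 hGN)
  -- decomposition of the integral
  have hsplit : ∀ G : ℝ × 𝕏 → ℝ, Measurable G → (∀ q, 0 ≤ G q) →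
      (∫⁻ q, ENNReal.ofReal (G q * Real.log (G q) - G q + 1) ∂νT ≤ (N : ℝ≥0∞)) →
      ∫ q, h q * (G q - 1) ∂νT =
        ((∫ q, h₂ q * G q ∂νT) - ∫ q, h₂ q ∂νT) + ∫ q in A₂ᶜ, h q * (G q - 1) ∂νT := by
    intro G hGm hG0 hGN
    have hInt := hHint G hGm hG0 hGN
    rw [← integral_add_compl hA₂meas hInt]
    congr 1
    rw [← integral_indicator hA₂meas]
    have heq : A₂.indicator (fun q => h q * (G q - 1)) = fun q => h₂ q * G q - h₂ q := by
      funext q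
      by_cases hq : q ∈ A₂
      · rw [Set.indicator_of_mem hq, hh₂def, Set.indicator_of_mem hq]
        ring
      · rw [Set.indicator_of_notMem hq, hh₂def, Set.indicator_of_notMem hq]
        ring
    rw [heq, integral_sub (hh₂Gint G hGm hG0 hGN) hh₂int]
  -- comparison with φ
  have hdiff : ∀ G : ℝ × 𝕏 → ℝ, Measurable G → (∀ q, 0 ≤ G q) →
      (∫⁻ q, ENNReal.ofReal (G q * Real.log (G q) - G q + 1) ∂νT ≤ (N : ℝ≥0∞)) →
      |(∫ q, h₂ q * G q ∂νT) - ∫ q, φ q * G q ∂νT| ≤ 3 * ε' := by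
    intro G hGm hG0 hGN
    have heq : (∫ q, h₂ q * G q ∂νT) - ∫ q, φ q * G q ∂νT = ∫ q, ψ q * G q ∂νT := by
      rw [← integral_sub (hh₂Gint G hGm hG0 hGN) (hφGint G hGm hG0 hGN)]
      congr 1
      funext q
      rw [hψdef]
      ring
    rw [heq]
    have hb : ∫⁻ q, ENNReal.ofReal |ψ q * G q| ∂νT ≤ ENNReal.ofReal (3 * ε') := by
      refine le_trans (le_of_eq (lintegral_congr fun q => ?_)) (hestψ G hGm hG0 hGN)
      rw [abs_mul, abs_of_nonneg (hG0 q)]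
    refine le_trans (abs_integral_le hb ENNReal.ofReal_ne_top) ?_
    rw [ENNReal.toReal_ofReal (by positivity)]
  -- estimate on the complement of A₂
  have hcompl : ∀ G : ℝ × 𝕏 → ℝ, Measurable G → (∀ q, 0 ≤ G q) →
      (∫⁻ q, ENNReal.ofReal (G q * Real.log (G q) - G q + 1) ∂νT ≤ (N : ℝ≥0∞)) →
      |∫ q in A₂ᶜ, h q * (G q - 1) ∂νT| ≤ 4 * ε' := by
    intro G hGm hG0 hGN
    have hlint : ∫⁻ q in A₂ᶜ, ENNReal.ofReal |h q * (G q - 1)| ∂νT ≤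
        ENNReal.ofReal (4 * ε') := by
      have hc : A₂ᶜ = A₁ ∪ A₃ := by rw [hA₂def, compl_compl]
      have heq : ∀ s : Set (ℝ × 𝕏), ∫⁻ q in s, ENNReal.ofReal |h q * (G q - 1)| ∂νT =
          ∫⁻ q in s, ENNReal.ofReal (|h q| * |G q - 1|) ∂νT :=
        fun s => lintegral_congr fun q => by rw [abs_mul]
      rw [hc, heq]
      refine le_trans (lintegral_union_le _ _ _) ?_
      refine le_trans (add_le_add (hA13 A₁ hT1 G hG0 hGN) (hA13 A₃ hT3 G hG0 hGN)) (le_of_eq ?_)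
      rw [← ENNReal.ofReal_add (by positivity) (by positivity)]
      ring_nf
    refine le_trans (abs_integral_le (μ := νT.restrict A₂ᶜ) hlint ENNReal.ofReal_ne_top) ?_
    rw [ENNReal.toReal_ofReal (by positivity)]
  -- pass to the limit
  obtain ⟨n₀, hn₀⟩ := Metric.tendsto_atTop.mp (hconv φ hφcont hφsupp) ε' hε'
  refine ⟨n₀, fun n hn => ?_⟩
  obtain ⟨hgnm, hgn0, hgnN⟩ := hgn n
  rw [Real.dist_eq, hsplit (gn n) hgnm hgn0 hgnN, hsplit g hgm hg0 hgN]
  have d1 := hdiff (gn n) hgnm hgn0 hgnN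
  have d2 := hdiff g hgm hg0 hgN
  have c1 := hcompl (gn n) hgnm hgn0 hgnN
  have c2 := hcompl g hgm hg0 hgN
  have dφ : |(∫ q, φ q * gn n q ∂νT) - ∫ q, φ q * g q ∂νT| < ε' := by
    have := hn₀ n hn
    rwa [Real.dist_eq] at this
  have harr : (((∫ q, h₂ q * gn n q ∂νT) - ∫ q, h₂ q ∂νT) + ∫ q in A₂ᶜ, h q * (gn n q - 1) ∂νT)
      - (((∫ q, h₂ q * g q ∂νT) - ∫ q, h₂ q ∂νT) + ∫ q in A₂ᶜ, h q * (g q - 1) ∂νT)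
      = ((∫ q, h₂ q * gn n q ∂νT) - ∫ q, φ q * gn n q ∂νT)
        + (((∫ q, φ q * gn n q ∂νT) - ∫ q, φ q * g q ∂νT)
        + (((∫ q, φ q * g q ∂νT) - ∫ q, h₂ q * g q ∂νT)
        + ((∫ q in A₂ᶜ, h q * (gn n q - 1) ∂νT) - ∫ q in A₂ᶜ, h q * (g q - 1) ∂νT))) := by
    ring
  rw [harr]
  have habs2 : |(∫ q, φ q * g q ∂νT) - ∫ q, h₂ q * g q ∂νT| ≤ 3 * ε' := by
    rw [abs_sub_comm]
    exact d2
  calc |_| ≤ |(∫ q, h₂ q * gn n q ∂νT) - ∫ q, φ q * gn n q ∂νT|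
        + (|(∫ q, φ q * gn n q ∂νT) - ∫ q, φ q * g q ∂νT|
        + (|(∫ q, φ q * g q ∂νT) - ∫ q, h₂ q * g q ∂νT|
        + |(∫ q in A₂ᶜ, h q * (gn n q - 1) ∂νT) - ∫ q in A₂ᶜ, h q * (g q - 1) ∂νT|)) := by
        refine le_trans (abs_add_le _ _) ?_
        refine add_le_add_right (le_trans (abs_add_le _ _) ?_) _
        exact add_le_add_right (abs_add_le _ _) _
    _ < ε := by
        have htri := abs_sub (∫ q in A₂ᶜ, h q * (gn n q - 1) ∂νT)
          (∫ q in A₂ᶜ, h q * (g q - 1) ∂νT)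
        have hεeq : ε = 16 * ε' := by rw [hε'def]; ring
        rw [hεeq]
        linarith
end

section
/- For every real p≥2 there exists a constant c_p>0 such that for all x,h∈H: |‖x+h‖^p − ‖x‖^p − p·‖x‖^{p−2}·⟨x,h⟩| ≤ c_p·(‖x‖^{p−2}·‖h‖² + ‖h‖^p), where for p=2 the factor ‖x‖^{p−2} is interpreted as 1. -/
open scoped RealInnerProductSpace

private lemma rpow_bound_aux {q A : ℝ} (hq : 1 ≤ q) (hA : 0 < A) :
    ∀ r ∈ Set.Icc (A/4) (2*A), r ^ (q-2) ≤ ((2:ℝ)^q + 16) * A^(q-2) := by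
  intro r hr
  have hr0 : 0 < r := lt_of_lt_of_le (by linarith) hr.1
  have hA2 : (0:ℝ) ≤ A ^ (q-2) := Real.rpow_nonneg hA.le _
  have h7 : (0:ℝ) ≤ (2:ℝ)^q := Real.rpow_nonneg (by norm_num) q
  rcases le_total q 2 with h2 | h2
  · have h1 : r ^ (q-2) ≤ (A/4) ^ (q-2) :=
      Real.rpow_le_rpow_of_nonpos (by linarith) hr.1 (by linarith)
    have h4 : (A/4) ^ (q-2) = A^(q-2) * ((1/4:ℝ))^(q-2) := by
      rw [show (A/4:ℝ) = A * (1/4) by ring, Real.mul_rpow hA.le (by norm_num)]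
    have h5 : ((1/4:ℝ))^(q-2) = (4:ℝ)^(2-q) := by
      rw [show (1/4:ℝ) = 4⁻¹ by norm_num,
        Real.inv_rpow (by norm_num : (0:ℝ) ≤ 4),
        ← Real.rpow_neg (by norm_num : (0:ℝ) ≤ 4)]
      congr 1; ring
    have h6 : (4:ℝ)^(2-q) ≤ 4 := by
      calc (4:ℝ)^(2-q) ≤ (4:ℝ)^(1:ℝ) :=
            Real.rpow_le_rpow_of_exponent_le (by norm_num) (by linarith)
        _ = 4 := Real.rpow_one 4
    calc r^(q-2) ≤ A^(q-2) * (4:ℝ)^(2-q) := by rw [← h5, ← h4]; exact h1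
      _ ≤ ((2:ℝ)^q + 16) * A^(q-2) := by nlinarith
  · have h1 : r ^ (q-2) ≤ (2*A) ^ (q-2) :=
      Real.rpow_le_rpow hr0.le hr.2 (by linarith)
    have h4 : (2*A) ^ (q-2) = (2:ℝ)^(q-2) * A^(q-2) :=
      Real.mul_rpow (by norm_num) hA.le
    have h6 : (2:ℝ)^(q-2) ≤ (2:ℝ)^q :=
      Real.rpow_le_rpow_of_exponent_le (by norm_num) (by linarith)
    calc r^(q-2) ≤ (2:ℝ)^(q-2) * A^(q-2) := by rw [← h4]; exact h1
      _ ≤ ((2:ℝ)^q + 16) * A^(q-2) := by nlinarith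

private lemma quad_taylor {q A u : ℝ} (hq : 1 ≤ q) (hA : 0 < A)
    (hu : |u| ≤ (9/16)*A) :
    |(A+u)^q - A^q - q*A^(q-1)*u| ≤ q*q*((2:ℝ)^q + 16) * A^(q-2) * u^2 := by
  set S : Set ℝ := Set.Icc (A/4) (2*A) with hS
  obtain ⟨hul, hur⟩ := abs_le.mp hu
  have hAS : A ∈ S := ⟨by linarith, by linarith⟩
  have hAuS : A + u ∈ S := ⟨by linarith, by linarith⟩
  have hpos : ∀ r ∈ S, 0 < r := fun r hr => lt_of_lt_of_le (by linarith) hr.1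
  set K : ℝ := q*(q-1)*(((2:ℝ)^q + 16) * A^(q-2)) with hK
  have hM : 0 ≤ ((2:ℝ)^q + 16) * A^(q-2) := by positivity
  have hKnn : 0 ≤ K :=
    mul_nonneg (mul_nonneg (by linarith) (by linarith)) hM
  -- Step A : Lipschitz bound on the derivative r ↦ q * r^(q-1)
  have lipA : ∀ r ∈ S, |q * r^(q-1) - q * A^(q-1)| ≤ K * |r - A| := by
    intro r hr
    have := Convex.norm_image_sub_le_of_norm_hasDerivWithin_le
      (f := fun t : ℝ => q * t^(q-1)) (f' := fun t : ℝ => q * ((q-1) * t^(q-1-1)))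
      (s := S) (C := K)
      (fun t ht => (((Real.hasDerivAt_rpow_const
          (Or.inl (ne_of_gt (hpos t ht)))).const_mul q).hasDerivWithinAt))
      (fun t ht => by
        show ‖q * ((q-1) * t^(q-1-1))‖ ≤ K
        have hb := rpow_bound_aux hq hA t ht
        have ht0 : 0 < t := hpos t ht
        rw [show q - 1 - 1 = q - 2 by ring]
        have htnn : (0:ℝ) ≤ t ^ (q-2) := Real.rpow_nonneg ht0.le _
        rw [Real.norm_eq_abs, abs_of_nonneg
          (mul_nonneg (by linarith) (mul_nonneg (by linarith) htnn))]
        calc q * ((q-1) * t^(q-2)) ≤ q * ((q-1) * (((2:ℝ)^q + 16) * A^(q-2))) :=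
              mul_le_mul_of_nonneg_left
                (mul_le_mul_of_nonneg_left hb (by linarith)) (by linarith)
          _ = K := by rw [hK]; ring)
      (convex_Icc _ _) hAS hr
    simpa [Real.norm_eq_abs, mul_comm] using this
  -- Step B : MVT for ψ
  have hTS : Set.uIcc A (A+u) ⊆ S := by
    rw [hS, ← Set.uIcc_of_le (by linarith : A/4 ≤ 2*A)]
    exact Set.uIcc_subset_uIcc (by rw [Set.uIcc_of_le (by linarith : A/4 ≤ 2*A)]; exact hAS)
      (by rw [Set.uIcc_of_le (by linarith : A/4 ≤ 2*A)]; exact hAuS)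
  have hdist : ∀ r ∈ Set.uIcc A (A+u), |r - A| ≤ |u| := by
    intro r hr
    rw [Set.uIcc_eq_union] at hr
    rcases hr with hr | hr <;> rw [abs_le] <;> constructor
    · linarith [hr.1, abs_nonneg u]
    · calc r - A ≤ u := by linarith [hr.2]
        _ ≤ |u| := le_abs_self u
    · calc -|u| ≤ u := neg_abs_le u
        _ ≤ r - A := by linarith [hr.1]
    · linarith [hr.2, abs_nonneg u]
  have mvt := Convex.norm_image_sub_le_of_norm_hasDerivWithin_le
    (f := fun t : ℝ => t^q - q*A^(q-1)*t) (f' := fun t : ℝ => q * t^(q-1) - q*A^(q-1)*1)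
    (s := Set.uIcc A (A+u)) (C := K * |u|)
    (fun t ht => ((Real.hasDerivAt_rpow_const
        (Or.inl (ne_of_gt (hpos t (hTS ht))))).sub
        ((hasDerivAt_id t).const_mul (q*A^(q-1)))).hasDerivWithinAt)
    (fun t ht => by
      show ‖q * t^(q-1) - q*A^(q-1)*1‖ ≤ K * |u|
      rw [Real.norm_eq_abs, mul_one]
      calc |q * t^(q-1) - q*A^(q-1)| ≤ K * |t - A| := lipA t (hTS ht)
        _ ≤ K * |u| := mul_le_mul_of_nonneg_left (hdist t ht) hKnn)
    (convex_uIcc _ _) (Set.left_mem_uIcc) (Set.right_mem_uIcc)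
  have e1 : ((A+u)^q - q*A^(q-1)*(A+u)) - (A^q - q*A^(q-1)*A)
      = (A+u)^q - A^q - q*A^(q-1)*u := by ring
  rw [Real.norm_eq_abs, Real.norm_eq_abs, e1, show A + u - A = u by ring] at mvt
  calc |(A+u)^q - A^q - q*A^(q-1)*u| ≤ K * |u| * |u| := mvt
    _ = K * u^2 := by rw [mul_assoc, abs_mul_abs_self, sq]
    _ ≤ q*q*((2:ℝ)^q + 16) * A^(q-2) * u^2 := by
        have hq2 : q*(q-1) ≤ q*q := by nlinarith
        calc K * u^2 = (q*(q-1)) * (((2:ℝ)^q + 16) * A^(q-2) * u^2) := by rw [hK]; ring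
          _ ≤ (q*q) * (((2:ℝ)^q + 16) * A^(q-2) * u^2) :=
              mul_le_mul_of_nonneg_right hq2 (by positivity)
          _ = q*q*((2:ℝ)^q + 16) * A^(q-2) * u^2 := by ring

private lemma hpow_aux (t : ℝ) (ht : 0 ≤ t) (r : ℝ) : t ^ (2*r) = (t^(2:ℕ))^r := by
  rw [Real.rpow_mul ht, Real.rpow_two]

set_option maxHeartbeats 1000000 in
private lemma scalar_est {p q : ℝ} (hp : 2 ≤ p) (hqdef : q = p/2)
    (a b s : ℝ) (ha : 0 ≤ a) (hb : 0 ≤ b) (hs : |s| ≤ a*b) :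
    |(a^(2:ℕ) + (2*s + b^(2:ℕ)))^q - (a^(2:ℕ))^q - p*(a^(2:ℕ))^(q-1)*s| ≤
      ((5:ℝ)^p + (4:ℝ)^p + p*(4:ℝ)^(p-1) + 6*(q*q*((2:ℝ)^q+16)) + q) *
        ((a^(2:ℕ))^(q-1) * b^(2:ℕ) + b^p) := by
  have hq : 1 ≤ q := by rw [hqdef]; linarith
  have hp0 : (0:ℝ) < p := by linarith
  have hsl := neg_abs_le s
  have hsu := le_abs_self s
  obtain ⟨A, hAdef⟩ : ∃ A, a^(2:ℕ) = A := ⟨_, rfl⟩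
  obtain ⟨u, hudef⟩ : ∃ u, 2*s + b^(2:ℕ) = u := ⟨_, rfl⟩
  rw [hAdef, hudef]
  have hAnn : 0 ≤ A := hAdef ▸ sq_nonneg a
  have hAq1 : 0 ≤ A^(q-1) := Real.rpow_nonneg hAnn _
  have hbp : 0 ≤ b^p := Real.rpow_nonneg hb p
  have hb2nn : (0:ℝ) ≤ b^(2:ℕ) := sq_nonneg b
  have hAunn : 0 ≤ A + u := by
    rw [← hAdef, ← hudef]; nlinarith [sq_nonneg (a-b), hsl, hs]
  have hXnn : 0 ≤ (A+u)^q := Real.rpow_nonneg hAunn q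
  have hYnn : 0 ≤ A^q := Real.rpow_nonneg hAnn q
  have hC1 : (0:ℝ) ≤ (5:ℝ)^p := Real.rpow_nonneg (by norm_num) p
  have hC2 : (0:ℝ) ≤ (4:ℝ)^p := Real.rpow_nonneg (by norm_num) p
  have hC3 : (0:ℝ) ≤ p*(4:ℝ)^(p-1) :=
    mul_nonneg hp0.le (Real.rpow_nonneg (by norm_num) _)
  have hC4 : (0:ℝ) ≤ 6*(q*q*((2:ℝ)^q+16)) := by positivity
  have hterm : 0 ≤ A^(q-1) * b^(2:ℕ) := mul_nonneg hAq1 hb2nn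
  have e2 : A^q = a^p := by
    rw [← hAdef, ← hpow_aux a ha q]; congr 1; rw [hqdef]; ring
  have e3 : A^(q-1) = a^(p-2) := by
    rw [← hAdef, ← hpow_aux a ha (q-1)]; congr 1; rw [hqdef]; ring
  by_cases hcase : a ≤ 4*b
  · -- crude bound
    have hb1 : (A+u)^q ≤ (5:ℝ)^p * b^p := by
      have h1 : A + u ≤ (5*b)^(2:ℕ) := by
        rw [← hAdef, ← hudef]
        nlinarith [hsu, hs, mul_nonneg (sub_nonneg.2 hcase) hb,
          mul_nonneg (sub_nonneg.2 hcase) (by linarith : (0:ℝ) ≤ 4*b + a)]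
      calc (A+u)^q ≤ ((5*b)^(2:ℕ))^q := Real.rpow_le_rpow hAunn h1 (by linarith)
        _ = (5*b)^p := by rw [← hpow_aux (5*b) (by linarith) q]; congr 1; rw [hqdef]; ring
        _ = (5:ℝ)^p * b^p := Real.mul_rpow (by norm_num) hb
    have hb2 : A^q ≤ (4:ℝ)^p * b^p := by
      rw [e2]
      calc a^p ≤ (4*b)^p := Real.rpow_le_rpow ha hcase hp0.le
        _ = (4:ℝ)^p * b^p := Real.mul_rpow (by norm_num) hb
    have hap1 : a^(p-2) * a = a^(p-1) := by
      have h := Real.rpow_add' ha (show (p-2)+1 ≠ 0 by intro hP; linarith)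
      rw [Real.rpow_one, show p-2+1 = p-1 by ring] at h
      exact h.symm
    have hbp1 : b^(p-1) * b = b^p := by
      have h := Real.rpow_add' hb (show (p-1)+1 ≠ 0 by intro hP; linarith)
      rw [Real.rpow_one, show p-1+1 = p by ring] at h
      exact h.symm
    have hZ : |p*A^(q-1)*s| ≤ p * (4:ℝ)^(p-1) * b^p := by
      have h3 : a^(p-1) ≤ (4:ℝ)^(p-1) * b^(p-1) := by
        calc a^(p-1) ≤ (4*b)^(p-1) := Real.rpow_le_rpow ha hcase (by linarith)
          _ = (4:ℝ)^(p-1) * b^(p-1) := Real.mul_rpow (by norm_num) hb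
      have h5 : a^(p-1) * b ≤ (4:ℝ)^(p-1) * b^p := by
        rw [← hbp1]
        have h6 : (0:ℝ) ≤ (4:ℝ)^(p-1) := Real.rpow_nonneg (by norm_num) _
        nlinarith [Real.rpow_nonneg hb (p-1), Real.rpow_nonneg ha (p-1)]
      have h7 : A^(q-1)*|s| ≤ a^(p-1) * b := by
        rw [e3, ← hap1]
        have := Real.rpow_nonneg ha (p-2)
        nlinarith [abs_nonneg s]
      calc |p*A^(q-1)*s| = p*(A^(q-1)*|s|) := by
            rw [abs_mul, abs_of_nonneg (mul_nonneg hp0.le hAq1)]; ring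
        _ ≤ p*(a^(p-1)*b) := mul_le_mul_of_nonneg_left h7 hp0.le
        _ ≤ p*((4:ℝ)^(p-1)*b^p) := mul_le_mul_of_nonneg_left h5 hp0.le
        _ = p * (4:ℝ)^(p-1) * b^p := by ring
    have habs : |(A+u)^q - A^q - p*A^(q-1)*s| ≤ (A+u)^q + A^q + |p*A^(q-1)*s| := by
      rw [abs_le]
      constructor
      · have := le_abs_self (p*A^(q-1)*s); linarith
      · have := neg_abs_le (p*A^(q-1)*s); linarith
    calc |(A+u)^q - A^q - p*A^(q-1)*s|
        ≤ (A+u)^q + A^q + |p*A^(q-1)*s| := habs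
      _ ≤ ((5:ℝ)^p + (4:ℝ)^p + p*(4:ℝ)^(p-1)) * b^p := by linarith
      _ ≤ ((5:ℝ)^p + (4:ℝ)^p + p*(4:ℝ)^(p-1)) * (A^(q-1) * b^(2:ℕ) + b^p) :=
          mul_le_mul_of_nonneg_left (by linarith) (by linarith)
      _ ≤ ((5:ℝ)^p + (4:ℝ)^p + p*(4:ℝ)^(p-1) + 6*(q*q*((2:ℝ)^q+16)) + q) *
            (A^(q-1) * b^(2:ℕ) + b^p) :=
          mul_le_mul_of_nonneg_right (by linarith) (by linarith)
  · -- Taylor case : 4*b < a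
    rw [not_le] at hcase
    have hapos : 0 < a := by linarith [hb]
    have hApos : 0 < A := by rw [← hAdef]; positivity
    have hba : b ≤ a/4 := by linarith
    have huabs : |u| ≤ 2*(a*b) + b^(2:ℕ) := by
      rw [← hudef]
      calc |2*s + b^(2:ℕ)| ≤ |2*s| + |b^(2:ℕ)| := abs_add_le _ _
        _ = 2*|s| + b^(2:ℕ) := by rw [abs_mul, abs_of_nonneg hb2nn, abs_two]
        _ ≤ 2*(a*b) + b^(2:ℕ) := by linarith
    have huA : |u| ≤ (9/16)*A := by
      rw [← hAdef]
      nlinarith [abs_nonneg u]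
    have hF := quad_taylor hq hApos huA
    have hu2 : u^2 ≤ 6 * A * b^(2:ℕ) := by
      have h8 : u^2 ≤ (2*(a*b) + b^(2:ℕ))^2 := by
        nlinarith [abs_nonneg u, sq_abs u]
      rw [← hAdef]
      nlinarith [h8, mul_nonneg (sub_nonneg.2 hcase.le) (mul_nonneg ha (mul_nonneg hb hb)),
        mul_nonneg (mul_nonneg (sub_nonneg.2 hcase.le) (by linarith : (0:ℝ) ≤ a + 4*b))
          (mul_nonneg hb hb)]
    have hAq2 : A^(q-2) * A = A^(q-1) := by
      have h := Real.rpow_add hApos (q-2) 1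
      rw [Real.rpow_one, show q-2+1 = q-1 by ring] at h
      exact h.symm
    have hF2 : |(A+u)^q - A^q - q*A^(q-1)*u| ≤ 6*(q*q*((2:ℝ)^q+16)) * (A^(q-1) * b^(2:ℕ)) := by
      have h2 : 0 ≤ A^(q-2) := Real.rpow_nonneg hAnn _
      have h4 : (0:ℝ) ≤ q*q*((2:ℝ)^q + 16) := by positivity
      calc |(A+u)^q - A^q - q*A^(q-1)*u| ≤ q*q*((2:ℝ)^q + 16) * A^(q-2) * u^2 := hF
        _ ≤ q*q*((2:ℝ)^q + 16) * A^(q-2) * (6*A*b^(2:ℕ)) :=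
            mul_le_mul_of_nonneg_left hu2 (mul_nonneg h4 h2)
        _ = 6*(q*q*((2:ℝ)^q+16)) * ((A^(q-2)*A) * b^(2:ℕ)) := by ring
        _ = 6*(q*q*((2:ℝ)^q+16)) * (A^(q-1) * b^(2:ℕ)) := by rw [hAq2]
    have hsplit : (A+u)^q - A^q - p*A^(q-1)*s
        = ((A+u)^q - A^q - q*A^(q-1)*u) + q*(A^(q-1)*(b^(2:ℕ))) := by
      have hps : p = 2*q := by rw [hqdef]; ring
      rw [hps, ← hudef]; ring
    have htermnn : 0 ≤ q*(A^(q-1)*(b^(2:ℕ))) :=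
      mul_nonneg (by linarith) hterm
    calc |(A+u)^q - A^q - p*A^(q-1)*s|
        = |((A+u)^q - A^q - q*A^(q-1)*u) + q*(A^(q-1)*(b^(2:ℕ)))| := by rw [hsplit]
      _ ≤ |(A+u)^q - A^q - q*A^(q-1)*u| + q*(A^(q-1)*(b^(2:ℕ))) := by
          calc |((A+u)^q - A^q - q*A^(q-1)*u) + q*(A^(q-1)*(b^(2:ℕ)))|
              ≤ |(A+u)^q - A^q - q*A^(q-1)*u| + |q*(A^(q-1)*(b^(2:ℕ)))| := abs_add_le _ _
            _ = |(A+u)^q - A^q - q*A^(q-1)*u| + q*(A^(q-1)*(b^(2:ℕ))) := by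
                rw [abs_of_nonneg htermnn]
      _ ≤ (6*(q*q*((2:ℝ)^q+16)) + q) * (A^(q-1) * b^(2:ℕ)) := by
          rw [add_mul]; linarith
      _ ≤ (6*(q*q*((2:ℝ)^q+16)) + q) * (A^(q-1) * b^(2:ℕ) + b^p) :=
          mul_le_mul_of_nonneg_left (by linarith) (by positivity)
      _ ≤ ((5:ℝ)^p + (4:ℝ)^p + p*(4:ℝ)^(p-1) + 6*(q*q*((2:ℝ)^q+16)) + q) *
            (A^(q-1) * b^(2:ℕ) + b^p) :=
          mul_le_mul_of_nonneg_right (by linarith) (by linarith)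

theorem stmt_8
    {H : Type*} [NormedAddCommGroup H] [InnerProductSpace ℝ H] :
    ∀ p : ℝ, 2 ≤ p → ∃ c : ℝ, 0 < c ∧ ∀ x h : H,
      |‖x + h‖ ^ p - ‖x‖ ^ p - p * ‖x‖ ^ (p - 2) * ⟪x, h⟫| ≤
        c * (‖x‖ ^ (p - 2) * ‖h‖ ^ (2 : ℕ) + ‖h‖ ^ p) := by
  intro p hp
  have hp0 : (0:ℝ) < p := by linarith
  set q : ℝ := p/2 with hqdef
  set C : ℝ := (5:ℝ)^p + (4:ℝ)^p + p*(4:ℝ)^(p-1) + 6*(q*q*((2:ℝ)^q+16)) + q with hC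
  have hq : 1 ≤ q := by rw [hqdef]; linarith
  have hCnn : 0 ≤ C := by
    have hC1 : (0:ℝ) ≤ (5:ℝ)^p := Real.rpow_nonneg (by norm_num) p
    have hC2 : (0:ℝ) ≤ (4:ℝ)^p := Real.rpow_nonneg (by norm_num) p
    have hC3 : (0:ℝ) ≤ p*(4:ℝ)^(p-1) :=
      mul_nonneg hp0.le (Real.rpow_nonneg (by norm_num) _)
    have hC4 : (0:ℝ) ≤ 6*(q*q*((2:ℝ)^q+16)) := by positivity
    rw [hC]; linarith
  refine ⟨C + 1, by linarith, fun x h => ?_⟩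
  have key := scalar_est hp hqdef ‖x‖ ‖h‖ ⟪x, h⟫ (norm_nonneg x) (norm_nonneg h)
    (abs_real_inner_le_norm x h)
  have e1 : ‖x + h‖ ^ p = (‖x‖^(2:ℕ) + (2*⟪x,h⟫ + ‖h‖^(2:ℕ)))^q := by
    have h2 : ‖x + h‖^(2:ℕ) = ‖x‖^(2:ℕ) + (2*⟪x,h⟫ + ‖h‖^(2:ℕ)) := by
      rw [norm_add_sq_real]; ring
    rw [← h2, ← hpow_aux _ (norm_nonneg _) q]
    congr 1
    rw [hqdef]; ring
  have e2 : ‖x‖ ^ p = (‖x‖^(2:ℕ))^q := by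
    rw [← hpow_aux _ (norm_nonneg x) q]
    congr 1; rw [hqdef]; ring
  have e3 : ‖x‖ ^ (p-2) = (‖x‖^(2:ℕ))^(q-1) := by
    rw [← hpow_aux _ (norm_nonneg x) (q-1)]
    congr 1; rw [hqdef]; ring
  rw [e1, e2, e3]
  have hbr : 0 ≤ (‖x‖^(2:ℕ))^(q-1) * ‖h‖^(2:ℕ) + ‖h‖^p := by
    have := Real.rpow_nonneg (sq_nonneg ‖x‖) (q-1)
    have := Real.rpow_nonneg (norm_nonneg h) p
    have : (0:ℝ) ≤ ‖h‖^(2:ℕ) := sq_nonneg _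
    positivity
  calc |(‖x‖^(2:ℕ) + (2*⟪x,h⟫ + ‖h‖^(2:ℕ)))^q - (‖x‖^(2:ℕ))^q - p*(‖x‖^(2:ℕ))^(q-1)*⟪x,h⟫|
      ≤ C * ((‖x‖^(2:ℕ))^(q-1) * ‖h‖^(2:ℕ) + ‖h‖^p) := key
    _ ≤ (C+1) * ((‖x‖^(2:ℕ))^(q-1) * ‖h‖^(2:ℕ) + ‖h‖^p) :=
        mul_le_mul_of_nonneg_right (by linarith) hbr
end

section
/- Fix M>0 and N∈ℕ. For every strongly measurable r:[0,T]→V with sup_{t∈[0,T]}‖i(r_t)‖_H ≤ M and every g∈S^N such that (s,z)↦f(s,r_s,z)·(g(s,z)−1) is Bochner integrable with respect to ν_T, define y_t = ∫_0^t ∫_𝕏 f(s,r_s,z)·(g(s,z)−1) ν(dz) ds ∈ H for t∈[0,T]. Then: (i) for all 0≤s≤t≤T, ‖y_t−y_s‖_H ≤ (M+1)·sup_{φ∈S^N} ∫_s^t ∫_𝕏 L_f(l,z)·|φ(l,z)−1| ν(dz) dl; (ii) sup over all such (r,g) and all t∈[0,T] of ‖y_t‖_H is at most (M+1)·sup_{φ∈S^N}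 ∫_{𝕏_T} L_f·|φ−1| dν_T, which is finite; (iii) for every η>0 there exists ϖ>0, independent of r and g, such that ‖y_t−y_s‖_H ≤ η whenever s,t∈[0,T] with |t−s|≤ϖ. -/
open MeasureTheory Real Filter
open scoped ENNReal

lemma ell_sqrt (x : ℝ) (hx : 0 ≤ x) : (Real.sqrt x - 1)^2 ≤ x * Real.log x - x + 1 := by
  rcases hx.eq_or_lt with h | h
  · simp [← h]
  · have hs : 0 < Real.sqrt x := Real.sqrt_pos.2 h
    have hsq : Real.sqrt x * Real.sqrt x = x := Real.mul_self_sqrt hx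
    have hlog : Real.log (Real.sqrt x) = Real.log x / 2 := Real.log_sqrt hx
    have h2 : 1 - (Real.sqrt x)⁻¹ ≤ Real.log (Real.sqrt x) :=
      Real.one_sub_inv_le_log_of_pos hs
    have hinv : Real.sqrt x * (Real.sqrt x)⁻¹ = 1 := mul_inv_cancel₀ hs.ne'
    have hxs : x * (Real.sqrt x)⁻¹ = Real.sqrt x := by
      field_simp
      rw [Real.sq_sqrt hx]
    nlinarith [mul_le_mul_of_nonneg_left h2 (by positivity : (0:ℝ) ≤ 2 * x), hxs, hlog]

lemma ell_nonneg (x : ℝ) (hx : 0 ≤ x) : 0 ≤ x * Real.log x - x + 1 :=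
  le_trans (sq_nonneg _) (ell_sqrt x hx)

lemma young_ell (x y : ℝ) (hx : 0 ≤ x) : x * y ≤ Real.exp y + (x * Real.log x - x + 1) := by
  rcases hx.eq_or_lt with h | h
  · rw [← h]; simp; positivity
  · have h1 := Real.add_one_le_exp (y - Real.log x)
    rw [Real.exp_sub, Real.exp_log h] at h1
    have h2 := mul_le_mul_of_nonneg_left h1 h.le
    rw [mul_div_cancel₀ _ h.ne'] at h2
    nlinarith

lemma quad_small (x : ℝ) (hx0 : 0 ≤ x) (hx2 : x ≤ 2) :
    (x - 1)^2 ≤ 8 * (x * Real.log x - x + 1) := by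
  have h := ell_sqrt x hx0
  have hs0 : 0 ≤ Real.sqrt x := Real.sqrt_nonneg x
  have hsq : Real.sqrt x ^ 2 = x := Real.sq_sqrt hx0
  have hs2 : Real.sqrt x ≤ 1.5 := by
    rw [show (1.5:ℝ) = Real.sqrt (1.5^2) from (Real.sqrt_sq (by norm_num)).symm]
    exact Real.sqrt_le_sqrt (by norm_num [hx2]; linarith)
  have h8 : (Real.sqrt x + 1)^2 ≤ 8 := by nlinarith
  nlinarith [mul_nonneg (sq_nonneg (Real.sqrt x - 1))
    (by linarith : (0:ℝ) ≤ 8 - (Real.sqrt x + 1)^2)]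

lemma lin_mid (x : ℝ) (hx : 2 ≤ x) :
    (2 * Real.log 2 - 1) * (x - 1) ≤ x * Real.log x - x + 1 := by
  have hx0 : (0:ℝ) < x := by linarith
  have h : 1 - (x/2)⁻¹ ≤ Real.log (x/2) := Real.one_sub_inv_le_log_of_pos (by linarith)
  rw [Real.log_div hx0.ne' (by norm_num)] at h
  have hinv : (x/2)⁻¹ * x = 2 := by field_simp
  have hl2 : Real.log 2 < 1 := by linarith [Real.log_two_lt_d9]
  have hl2' : (0:ℝ) < Real.log 2 := Real.log_pos (by norm_num)
  nlinarith [mul_le_mul_of_nonneg_right h hx0.le,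
    mul_nonneg (by linarith : (0:ℝ) ≤ x - 2) (by linarith : 0 ≤ 1 - Real.log 2)]

lemma lin_tail (β x : ℝ) (hβ : 1 ≤ Real.log β) (hβ0 : 0 < β) (hx : β ≤ x) :
    (Real.log β - 1) * (x - 1) ≤ x * Real.log x - x + 1 := by
  have hx0 : 0 < x := lt_of_lt_of_le hβ0 hx
  have hlog : Real.log β ≤ Real.log x := Real.log_le_log hβ0 hx
  nlinarith [mul_le_mul_of_nonneg_left hlog hx0.le]

set_option maxHeartbeats 2000000 in
theorem stmt_12
    {𝕏 : Type*} [TopologicalSpace 𝕏] [PolishSpace 𝕏] [LocallyCompactSpace 𝕏]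
    [MeasurableSpace 𝕏] [BorelSpace 𝕏]
    {H : Type*} [NormedAddCommGroup H] [InnerProductSpace ℝ H]
    [TopologicalSpace.SeparableSpace H] [MeasurableSpace H] [BorelSpace H]
    {V : Type*} [NormedAddCommGroup V] [NormedSpace ℝ V]
    [TopologicalSpace.SeparableSpace V] [MeasurableSpace V] [BorelSpace V]
    (T : ℝ) (hT : 0 < T)
    (ν : Measure 𝕏) [SigmaFinite ν] (hνK : ∀ Kc : Set 𝕏, IsCompact Kc → ν Kc < ⊤)
    (νT : Measure (ℝ × 𝕏)) (hνT : νT = (volume.restrict (Set.Icc 0 T)).prod ν)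
    (i : V →L[ℝ] H) (hiInj : Function.Injective i) (hiDense : DenseRange i)
    (f : ℝ → V → 𝕏 → H)
    (hfm : Measurable fun q : ℝ × V × 𝕏 => f q.1 q.2.1 q.2.2)
    (Lf : ℝ × 𝕏 → ℝ) (hLfm : Measurable Lf) (hLfnn : ∀ q, 0 ≤ Lf q)
    (hLfint : ∫⁻ q, ENNReal.ofReal (Lf q ^ (2 : ℕ)) ∂νT < ⊤)
    (hLfH : ∃ δ : ℝ, 0 < δ ∧ ∀ Γ : Set (ℝ × 𝕏), MeasurableSet Γ → νT Γ < ⊤ →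
      ∫⁻ q in Γ, ENNReal.ofReal (Real.exp (δ * Lf q ^ (2 : ℝ))) ∂νT < ⊤)
    (hfb : ∀ (t : ℝ) (v : V) (z : 𝕏), ‖f t v z‖ ≤ Lf (t, z) * (1 + ‖i v‖))
    (M : ℝ) (hM : 0 < M) (N : ℕ)
    (SN : Set (ℝ × 𝕏 → ℝ))
    (hSN : SN = {g : ℝ × 𝕏 → ℝ | Measurable g ∧ (∀ q, 0 ≤ g q) ∧
      ∫⁻ q, ENNReal.ofReal (g q * Real.log (g q) - g q + 1) ∂νT ≤ (N : ℝ≥0∞)}) :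
    -- (i)
    (∀ r : ℝ → V, StronglyMeasurable r → (∀ t ∈ Set.Icc (0 : ℝ) T, ‖i (r t)‖ ≤ M) →
      ∀ g ∈ SN, Integrable (fun q : ℝ × 𝕏 => (g q - 1) • f q.1 (r q.1) q.2) νT →
      ∀ s t : ℝ, 0 ≤ s → s ≤ t → t ≤ T →
        ENNReal.ofReal
            ‖(∫ l in Set.Icc 0 t, ∫ z, (g (l, z) - 1) • f l (r l) z ∂ν)
              - ∫ l in Set.Icc 0 s, ∫ z, (g (l, z) - 1) • f l (r l) z ∂ν‖
          ≤ ENNReal.ofReal (M + 1) *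
            ⨆ φ ∈ SN, ∫⁻ q in Set.Icc s t ×ˢ (Set.univ : Set 𝕏),
              ENNReal.ofReal (Lf q * |φ q - 1|) ∂νT) ∧
    -- (ii)
    ((⨆ φ ∈ SN, ∫⁻ q, ENNReal.ofReal (Lf q * |φ q - 1|) ∂νT) < ⊤ ∧
      ∀ r : ℝ → V, StronglyMeasurable r → (∀ t ∈ Set.Icc (0 : ℝ) T, ‖i (r t)‖ ≤ M) →
      ∀ g ∈ SN, Integrable (fun q : ℝ × 𝕏 => (g q - 1) • f q.1 (r q.1) q.2) νT →
      ∀ t ∈ Set.Icc (0 : ℝ) T,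
        ENNReal.ofReal ‖∫ l in Set.Icc 0 t, ∫ z, (g (l, z) - 1) • f l (r l) z ∂ν‖
          ≤ ENNReal.ofReal (M + 1) *
            ⨆ φ ∈ SN, ∫⁻ q, ENNReal.ofReal (Lf q * |φ q - 1|) ∂νT) ∧
    -- (iii)
    (∀ η : ℝ, 0 < η → ∃ ϖ : ℝ, 0 < ϖ ∧
      ∀ r : ℝ → V, StronglyMeasurable r → (∀ t ∈ Set.Icc (0 : ℝ) T, ‖i (r t)‖ ≤ M) →
      ∀ g ∈ SN, Integrable (fun q : ℝ × 𝕏 => (g q - 1) • f q.1 (r q.1) q.2) νT →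
      ∀ s t : ℝ, s ∈ Set.Icc (0 : ℝ) T → t ∈ Set.Icc (0 : ℝ) T → |t - s| ≤ ϖ →
        ‖(∫ l in Set.Icc 0 t, ∫ z, (g (l, z) - 1) • f l (r l) z ∂ν)
            - ∫ l in Set.Icc 0 s, ∫ z, (g (l, z) - 1) • f l (r l) z ∂ν‖ ≤ η) := by
  obtain ⟨δ, hδ, hδint⟩ := hLfH
  -- the exceptional set where Lf is large
  set Γ1 : Set (ℝ × 𝕏) := {q | 1 < Lf q} with hΓ1
  have hΓ1m : MeasurableSet Γ1 := measurableSet_lt measurable_const hLfm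
  have hΓ1fin : νT Γ1 < ⊤ := by
    calc νT Γ1 = ∫⁻ _ in Γ1, 1 ∂νT := (setLIntegral_one _).symm
    _ ≤ ∫⁻ q in Γ1, ENNReal.ofReal (Lf q ^ (2:ℕ)) ∂νT := by
        refine setLIntegral_mono' hΓ1m fun q hq => ?_
        have h1 : (1:ℝ) ≤ Lf q ^ (2:ℕ) := by
          have : 1 < Lf q := hq
          nlinarith
        calc (1:ℝ≥0∞) = ENNReal.ofReal 1 := by simp
        _ ≤ _ := ENNReal.ofReal_le_ofReal h1
    _ ≤ ∫⁻ q, ENNReal.ofReal (Lf q ^ (2:ℕ)) ∂νT := setLIntegral_le_lintegral _ _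
    _ < ⊤ := hLfint
  set C : ℝ≥0∞ := ∫⁻ q in Γ1, ENNReal.ofReal (Real.exp (δ * Lf q ^ (2:ℕ))) ∂νT with hCdef
  have hC : C < ⊤ := by
    have h := hδint Γ1 hΓ1m hΓ1fin
    have hrw : ∀ q : ℝ × 𝕏, Lf q ^ (2:ℝ) = Lf q ^ (2:ℕ) := fun q => by
      rw [Real.rpow_two]
    rw [hCdef]
    simp only [hrw] at h
    exact h
  have hCtnn : (0:ℝ) ≤ C.toReal := ENNReal.toReal_nonneg
  -- measurability helper
  have hκpos : ∀ β : ℝ, 2 ≤ β → (0:ℝ) < 8 + (β - 1) / (2 * Real.log 2 - 1) := by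
    intro β hβ
    have hl2 : (0:ℝ) < 2 * Real.log 2 - 1 := by nlinarith [Real.log_two_gt_d9]
    have : (0:ℝ) ≤ (β - 1) / (2 * Real.log 2 - 1) := div_nonneg (by linarith) hl2.le
    linarith
  -- The master estimate
  have master : ∀ σ β : ℝ, δ ≤ σ → Real.exp 2 ≤ β →
      ∀ φ : ℝ × 𝕏 → ℝ, Measurable φ → (∀ q, 0 ≤ φ q) →
      (∫⁻ q, ENNReal.ofReal (φ q * Real.log (φ q) - φ q + 1) ∂νT ≤ (N : ℝ≥0∞)) →
      ∀ A : Set ℝ, MeasurableSet A →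
      ∫⁻ q in A ×ˢ (Set.univ : Set 𝕏), ENNReal.ofReal (Lf q * |φ q - 1|) ∂νT ≤
        (∫⁻ q in A ×ˢ (Set.univ : Set 𝕏), ENNReal.ofReal (Lf q ^ (2:ℕ)) ∂νT) ^ (1/2 : ℝ) *
          ENNReal.ofReal (Real.sqrt ((8 + (β - 1) / (2 * Real.log 2 - 1)) * (N + 1)))
        + ENNReal.ofReal (σ / (δ * (Real.log β - 1)) * N + σ⁻¹ * (C.toReal + N)) := by
    intro σ β hσ hβ φ hφm hφnn hφN A hA
    have hσ0 : 0 < σ := lt_of_lt_of_le hδ hσ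
    have he2 : (2:ℝ) ≤ Real.exp 2 := by nlinarith [Real.add_one_le_exp 2]
    have hβ2 : (2:ℝ) ≤ β := le_trans he2 hβ
    have hβ0 : (0:ℝ) < β := by linarith
    have hlogβ : 2 ≤ Real.log β := by
      calc (2:ℝ) = Real.log (Real.exp 2) := (Real.log_exp 2).symm
      _ ≤ Real.log β := Real.log_le_log (Real.exp_pos 2) hβ
    have hlb1 : 0 < Real.log β - 1 := by linarith
    have hl2 : (0:ℝ) < 2 * Real.log 2 - 1 := by nlinarith [Real.log_two_gt_d9]
    set κ := 8 + (β - 1) / (2 * Real.log 2 - 1) with hκdef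
    have hκ0 : 0 < κ := hκpos β hβ2
    have hκ8 : (8:ℝ) ≤ κ := by
      have h9 : 0 ≤ (β - 1) / (2 * Real.log 2 - 1) := div_nonneg (by linarith) hl2.le
      rw [hκdef]
      linarith
    have hℓnn : ∀ q : ℝ × 𝕏, 0 ≤ φ q * Real.log (φ q) - φ q + 1 :=
      fun q => ell_nonneg _ (hφnn q)
    have heℓm : Measurable fun q : ℝ × 𝕏 =>
        ENNReal.ofReal (φ q * Real.log (φ q) - φ q + 1) := by
      apply ENNReal.measurable_ofReal.comp
      exact ((hφm.mul (Real.measurable_log.comp hφm)).sub hφm).add measurable_const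
    have hum : Measurable fun q : ℝ × 𝕏 => ENNReal.ofReal (Lf q) :=
      ENNReal.measurable_ofReal.comp hLfm
    have hvm : Measurable fun q : ℝ × 𝕏 =>
        ENNReal.ofReal (if φ q ≤ β then |φ q - 1| else 0) := by
      apply ENNReal.measurable_ofReal.comp
      exact Measurable.ite (measurableSet_le hφm measurable_const)
        (hφm.sub measurable_const).abs measurable_const
    have hwm : Measurable (Γ1.indicator fun q => ENNReal.ofReal (Real.exp (δ * Lf q ^ (2:ℕ)))) :=
      Measurable.indicator (ENNReal.measurable_ofReal.comp
        (Real.measurable_exp.comp ((hLfm.pow_const 2).const_mul δ))) hΓ1m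
    -- pointwise decomposition
    have hpt : ∀ q : ℝ × 𝕏, ENNReal.ofReal (Lf q * |φ q - 1|) ≤
        ENNReal.ofReal (Lf q) * ENNReal.ofReal (if φ q ≤ β then |φ q - 1| else 0)
        + (ENNReal.ofReal (σ / (δ * (Real.log β - 1))) *
             ENNReal.ofReal (φ q * Real.log (φ q) - φ q + 1)
           + ENNReal.ofReal σ⁻¹ *
             (Γ1.indicator (fun q => ENNReal.ofReal (Real.exp (δ * Lf q ^ (2:ℕ)))) q
              + ENNReal.ofReal (φ q * Real.log (φ q) - φ q + 1))) := by
      intro q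
      by_cases h1 : φ q ≤ β
      · have heq : ENNReal.ofReal (Lf q * |φ q - 1|) =
            ENNReal.ofReal (Lf q) * ENNReal.ofReal (if φ q ≤ β then |φ q - 1| else 0) := by
          rw [if_pos h1, ← ENNReal.ofReal_mul (hLfnn q)]
        rw [heq]; exact le_self_add
      · push_neg at h1
        have hβφ : β ≤ φ q := h1.le
        have hφ2 : (2:ℝ) ≤ φ q := le_trans hβ2 hβφ
        have habs : |φ q - 1| = φ q - 1 := abs_of_nonneg (by linarith)
        refine le_trans ?_ le_add_self
        by_cases h2 : Lf q ≤ σ / δ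
        · have ht := lin_tail β (φ q) (by linarith) hβ0 hβφ
          have hre : Lf q * |φ q - 1| ≤
              σ / (δ * (Real.log β - 1)) * (φ q * Real.log (φ q) - φ q + 1) := by
            rw [habs]
            have hσδ : (0:ℝ) ≤ σ / δ := by positivity
            calc Lf q * (φ q - 1) ≤ σ / δ * (φ q - 1) :=
                mul_le_mul_of_nonneg_right h2 (by linarith)
            _ ≤ σ / δ * ((φ q * Real.log (φ q) - φ q + 1) / (Real.log β - 1)) := by
                refine mul_le_mul_of_nonneg_left ?_ hσδ
                rw [le_div_iff₀ hlb1]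
                linarith [ht]
            _ = σ / (δ * (Real.log β - 1)) * (φ q * Real.log (φ q) - φ q + 1) := by
                field_simp
          refine le_trans (ENNReal.ofReal_le_ofReal hre) ?_
          rw [ENNReal.ofReal_mul (by positivity)]
          exact le_self_add
        · push_neg at h2
          have hLf1 : 1 < Lf q := by
            have h3 : (1:ℝ) ≤ σ / δ := (one_le_div hδ).2 hσ
            linarith
          have hind : Γ1.indicator (fun q => ENNReal.ofReal (Real.exp (δ * Lf q ^ (2:ℕ)))) q =
              ENNReal.ofReal (Real.exp (δ * Lf q ^ (2:ℕ))) :=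
            Set.indicator_of_mem (show q ∈ Γ1 from hLf1) _
          have hre : Lf q * |φ q - 1| ≤
              σ⁻¹ * (Real.exp (δ * Lf q ^ (2:ℕ)) + (φ q * Real.log (φ q) - φ q + 1)) := by
            rw [habs]
            have hy := young_ell (φ q) (σ * Lf q) (hφnn q)
            have hee : Real.exp (σ * Lf q) ≤ Real.exp (δ * Lf q ^ (2:ℕ)) := by
              apply Real.exp_le_exp.2
              have hσδLf : σ < δ * Lf q := by
                rw [div_lt_iff₀ hδ] at h2
                linarith [h2]
              nlinarith [hLfnn q]
            have h3 : Lf q * (φ q - 1) ≤ σ⁻¹ * (φ q * (σ * Lf q)) := by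
              have heq2 : σ⁻¹ * (φ q * (σ * Lf q)) = φ q * Lf q := by
                field_simp
              rw [heq2]
              nlinarith [hLfnn q, hφnn q]
            calc Lf q * (φ q - 1) ≤ σ⁻¹ * (φ q * (σ * Lf q)) := h3
            _ ≤ σ⁻¹ * (Real.exp (σ * Lf q) + (φ q * Real.log (φ q) - φ q + 1)) :=
                mul_le_mul_of_nonneg_left hy (by positivity)
            _ ≤ _ := mul_le_mul_of_nonneg_left (by linarith) (by positivity)
          refine le_trans (ENNReal.ofReal_le_ofReal hre) ?_
          rw [ENNReal.ofReal_mul (by positivity),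
            ENNReal.ofReal_add (Real.exp_pos _).le (hℓnn q), hind]
          exact le_add_self
    -- integrate the decomposition
    have hconj : Real.HolderConjugate 2 2 := Real.HolderConjugate.two_two
    have hCS : ∫⁻ q in A ×ˢ (Set.univ : Set 𝕏),
          ENNReal.ofReal (Lf q) * ENNReal.ofReal (if φ q ≤ β then |φ q - 1| else 0) ∂νT ≤
        (∫⁻ q in A ×ˢ (Set.univ : Set 𝕏), ENNReal.ofReal (Lf q) ^ (2:ℝ) ∂νT) ^ (1/2:ℝ) *
        (∫⁻ q in A ×ˢ (Set.univ : Set 𝕏),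
          ENNReal.ofReal (if φ q ≤ β then |φ q - 1| else 0) ^ (2:ℝ) ∂νT) ^ (1/2:ℝ) := by
      have h := ENNReal.lintegral_mul_le_Lp_mul_Lq (νT.restrict (A ×ˢ (Set.univ : Set 𝕏)))
        hconj hum.aemeasurable hvm.aemeasurable
      simpa using h
    have hu2 : ∀ q : ℝ × 𝕏, ENNReal.ofReal (Lf q) ^ (2:ℝ) = ENNReal.ofReal (Lf q ^ (2:ℕ)) := by
      intro q
      rw [ENNReal.ofReal_rpow_of_nonneg (hLfnn q) (by norm_num), Real.rpow_two]
    have hv2 : ∀ q : ℝ × 𝕏, ENNReal.ofReal (if φ q ≤ β then |φ q - 1| else 0) ^ (2:ℝ) ≤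
        ENNReal.ofReal κ * ENNReal.ofReal (φ q * Real.log (φ q) - φ q + 1) := by
      intro q
      have hvnn : (0:ℝ) ≤ if φ q ≤ β then |φ q - 1| else 0 := by
        split <;> simp [abs_nonneg]
      rw [ENNReal.ofReal_rpow_of_nonneg hvnn (by norm_num), Real.rpow_two,
        ← ENNReal.ofReal_mul hκ0.le]
      apply ENNReal.ofReal_le_ofReal
      by_cases h : φ q ≤ β
      · rw [if_pos h, sq_abs]
        by_cases h2 : φ q ≤ 2
        · have hq := quad_small (φ q) (hφnn q) h2
          nlinarith [hℓnn q]
        · push_neg at h2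
          have hm := lin_mid (φ q) h2.le
          have hD : (β - 1) / (2 * Real.log 2 - 1) * (2 * Real.log 2 - 1) = β - 1 :=
            div_mul_cancel₀ _ hl2.ne'
          have hDnn : 0 ≤ (β - 1) / (2 * Real.log 2 - 1) := div_nonneg (by linarith) hl2.le
          have hstep : (β - 1) * (φ q - 1) ≤
              (β - 1) / (2 * Real.log 2 - 1) * (φ q * Real.log (φ q) - φ q + 1) := by
            calc (β - 1) * (φ q - 1)
                = (β - 1) / (2 * Real.log 2 - 1) * ((2 * Real.log 2 - 1) * (φ q - 1)) := by
                  field_simp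
            _ ≤ _ := mul_le_mul_of_nonneg_left hm hDnn
          have hφβ : φ q - 1 ≤ β - 1 := by linarith
          have hsq : (φ q - 1)^2 ≤ (β - 1) * (φ q - 1) := by nlinarith
          rw [hκdef]
          nlinarith [hℓnn q]
      · rw [if_neg h]
        have : (0:ℝ) ≤ κ * (φ q * Real.log (φ q) - φ q + 1) := mul_nonneg hκ0.le (hℓnn q)
        nlinarith
    -- bound the v-factor
    have hvint : ∫⁻ q in A ×ˢ (Set.univ : Set 𝕏),
        ENNReal.ofReal (if φ q ≤ β then |φ q - 1| else 0) ^ (2:ℝ) ∂νT ≤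
        ENNReal.ofReal (κ * (N + 1)) := by
      calc ∫⁻ q in A ×ˢ (Set.univ : Set 𝕏),
            ENNReal.ofReal (if φ q ≤ β then |φ q - 1| else 0) ^ (2:ℝ) ∂νT
          ≤ ∫⁻ q in A ×ˢ (Set.univ : Set 𝕏), ENNReal.ofReal κ *
              ENNReal.ofReal (φ q * Real.log (φ q) - φ q + 1) ∂νT := lintegral_mono hv2
      _ = ENNReal.ofReal κ * ∫⁻ q in A ×ˢ (Set.univ : Set 𝕏),
              ENNReal.ofReal (φ q * Real.log (φ q) - φ q + 1) ∂νT :=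
          lintegral_const_mul' _ _ ENNReal.ofReal_ne_top
      _ ≤ ENNReal.ofReal κ * ∫⁻ q, ENNReal.ofReal (φ q * Real.log (φ q) - φ q + 1) ∂νT :=
          mul_le_mul_right (setLIntegral_le_lintegral _ _) _
      _ ≤ ENNReal.ofReal κ * (N : ℝ≥0∞) := mul_le_mul_right hφN _
      _ = ENNReal.ofReal (κ * N) := by
          rw [← ENNReal.ofReal_natCast N, ← ENNReal.ofReal_mul hκ0.le]
      _ ≤ ENNReal.ofReal (κ * (N + 1)) := ENNReal.ofReal_le_ofReal (by nlinarith [hκ0.le])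
    have hfirst : ∫⁻ q in A ×ˢ (Set.univ : Set 𝕏),
          ENNReal.ofReal (Lf q) * ENNReal.ofReal (if φ q ≤ β then |φ q - 1| else 0) ∂νT ≤
        (∫⁻ q in A ×ˢ (Set.univ : Set 𝕏), ENNReal.ofReal (Lf q ^ (2:ℕ)) ∂νT) ^ (1/2:ℝ) *
          ENNReal.ofReal (Real.sqrt (κ * (N + 1))) := by
      refine le_trans hCS ?_
      have hA2 : (∫⁻ q in A ×ˢ (Set.univ : Set 𝕏), ENNReal.ofReal (Lf q) ^ (2:ℝ) ∂νT)
          = ∫⁻ q in A ×ˢ (Set.univ : Set 𝕏), ENNReal.ofReal (Lf q ^ (2:ℕ)) ∂νT := by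
        exact lintegral_congr fun q => hu2 q
      rw [hA2]
      refine mul_le_mul_right ?_ _
      calc (∫⁻ q in A ×ˢ (Set.univ : Set 𝕏),
            ENNReal.ofReal (if φ q ≤ β then |φ q - 1| else 0) ^ (2:ℝ) ∂νT) ^ (1/2:ℝ)
          ≤ (ENNReal.ofReal (κ * (N + 1))) ^ (1/2:ℝ) :=
            ENNReal.rpow_le_rpow hvint (by norm_num)
      _ = ENNReal.ofReal ((κ * (N + 1)) ^ ((1:ℝ)/2)) := by
          rw [ENNReal.ofReal_rpow_of_nonneg (by positivity) (by norm_num)]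
      _ = ENNReal.ofReal (Real.sqrt (κ * (N + 1))) := by
          rw [Real.sqrt_eq_rpow]
    -- the tail term
    have htail : ∫⁻ q in A ×ˢ (Set.univ : Set 𝕏),
        (ENNReal.ofReal (σ / (δ * (Real.log β - 1))) *
           ENNReal.ofReal (φ q * Real.log (φ q) - φ q + 1)
         + ENNReal.ofReal σ⁻¹ *
           (Γ1.indicator (fun q => ENNReal.ofReal (Real.exp (δ * Lf q ^ (2:ℕ)))) q
            + ENNReal.ofReal (φ q * Real.log (φ q) - φ q + 1))) ∂νT ≤
        ENNReal.ofReal (σ / (δ * (Real.log β - 1)) * N + σ⁻¹ * (C.toReal + N)) := by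
      refine le_trans (setLIntegral_le_lintegral _ _) ?_
      rw [lintegral_add_left (heℓm.const_mul _)]
      rw [lintegral_const_mul' _ _ ENNReal.ofReal_ne_top,
        lintegral_const_mul' _ _ ENNReal.ofReal_ne_top,
        lintegral_add_left hwm, lintegral_indicator hΓ1m]
      have hCN : (∫⁻ q in Γ1, ENNReal.ofReal (Real.exp (δ * Lf q ^ (2:ℕ))) ∂νT) +
          (∫⁻ q, ENNReal.ofReal (φ q * Real.log (φ q) - φ q + 1) ∂νT) ≤
          ENNReal.ofReal (C.toReal + N) := by
        rw [ENNReal.ofReal_add hCtnn (Nat.cast_nonneg N), ENNReal.ofReal_natCast,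
          ENNReal.ofReal_toReal hC.ne]
        exact add_le_add_right hφN _
      calc ENNReal.ofReal (σ / (δ * (Real.log β - 1))) *
            (∫⁻ q, ENNReal.ofReal (φ q * Real.log (φ q) - φ q + 1) ∂νT)
          + ENNReal.ofReal σ⁻¹ *
            ((∫⁻ q in Γ1, ENNReal.ofReal (Real.exp (δ * Lf q ^ (2:ℕ))) ∂νT) +
             ∫⁻ q, ENNReal.ofReal (φ q * Real.log (φ q) - φ q + 1) ∂νT)
          ≤ ENNReal.ofReal (σ / (δ * (Real.log β - 1))) * (N : ℝ≥0∞)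
            + ENNReal.ofReal σ⁻¹ * ENNReal.ofReal (C.toReal + N) :=
            add_le_add (mul_le_mul_right hφN _) (mul_le_mul_right hCN _)
      _ = ENNReal.ofReal (σ / (δ * (Real.log β - 1)) * N + σ⁻¹ * (C.toReal + N)) := by
          rw [← ENNReal.ofReal_natCast N, ← ENNReal.ofReal_mul (by positivity),
            ← ENNReal.ofReal_mul (by positivity),
            ← ENNReal.ofReal_add (by positivity) (by positivity)]
    calc ∫⁻ q in A ×ˢ (Set.univ : Set 𝕏), ENNReal.ofReal (Lf q * |φ q - 1|) ∂νT
        ≤ ∫⁻ q in A ×ˢ (Set.univ : Set 𝕏),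
            (ENNReal.ofReal (Lf q) * ENNReal.ofReal (if φ q ≤ β then |φ q - 1| else 0)
            + (ENNReal.ofReal (σ / (δ * (Real.log β - 1))) *
                 ENNReal.ofReal (φ q * Real.log (φ q) - φ q + 1)
               + ENNReal.ofReal σ⁻¹ *
                 (Γ1.indicator (fun q => ENNReal.ofReal (Real.exp (δ * Lf q ^ (2:ℕ)))) q
                  + ENNReal.ofReal (φ q * Real.log (φ q) - φ q + 1)))) ∂νT :=
          lintegral_mono hpt
    _ = (∫⁻ q in A ×ˢ (Set.univ : Set 𝕏),
            ENNReal.ofReal (Lf q) * ENNReal.ofReal (if φ q ≤ β then |φ q - 1| else 0) ∂νT)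
        + ∫⁻ q in A ×ˢ (Set.univ : Set 𝕏),
            (ENNReal.ofReal (σ / (δ * (Real.log β - 1))) *
               ENNReal.ofReal (φ q * Real.log (φ q) - φ q + 1)
             + ENNReal.ofReal σ⁻¹ *
               (Γ1.indicator (fun q => ENNReal.ofReal (Real.exp (δ * Lf q ^ (2:ℕ)))) q
                + ENNReal.ofReal (φ q * Real.log (φ q) - φ q + 1))) ∂νT :=
          lintegral_add_left (hum.mul hvm) _
    _ ≤ _ := add_le_add hfirst htail
  -- finiteness of the full integral of Lf ^ 2
  have hS2 : (∫⁻ q, ENNReal.ofReal (Lf q ^ (2:ℕ)) ∂νT) ≠ ⊤ := hLfint.ne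
  -- smallness of ∫ Lf² over thin time-slabs
  have small : ∀ ε' : ℝ≥0∞, ε' ≠ 0 → ∃ ϖ : ℝ, 0 < ϖ ∧ ∀ A : Set ℝ, MeasurableSet A →
      volume A ≤ ENNReal.ofReal ϖ →
      ∫⁻ q in A ×ˢ (Set.univ : Set 𝕏), ENNReal.ofReal (Lf q ^ (2:ℕ)) ∂νT ≤ ε' := by
    intro ε' hε'
    have hmeas : Measurable fun q : ℝ × 𝕏 => ENNReal.ofReal (Lf q ^ (2:ℕ)) :=
      ENNReal.measurable_ofReal.comp (hLfm.pow_const 2)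
    have hrepr : ∀ A : Set ℝ, MeasurableSet A →
        ∫⁻ q in A ×ˢ (Set.univ : Set 𝕏), ENNReal.ofReal (Lf q ^ (2:ℕ)) ∂νT
          = ∫⁻ l in A, (∫⁻ z, ENNReal.ofReal (Lf (l, z) ^ (2:ℕ)) ∂ν)
              ∂(volume.restrict (Set.Icc (0:ℝ) T)) := by
      intro A hA
      have h1 : νT.restrict (A ×ˢ (Set.univ : Set 𝕏)) =
          ((volume.restrict (Set.Icc (0:ℝ) T)).restrict A).prod ν := by
        rw [hνT, ← Measure.prod_restrict, Measure.restrict_univ]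
      rw [h1, MeasureTheory.lintegral_prod _ hmeas.aemeasurable]
    have htot : (∫⁻ l, (∫⁻ z, ENNReal.ofReal (Lf (l, z) ^ (2:ℕ)) ∂ν)
        ∂(volume.restrict (Set.Icc (0:ℝ) T))) ≠ ⊤ := by
      have h := hrepr Set.univ MeasurableSet.univ
      rw [Set.univ_prod_univ, Measure.restrict_univ, Measure.restrict_univ] at h
      rw [← h]
      exact hS2
    obtain ⟨d, hd0, hd⟩ := exists_pos_setLIntegral_lt_of_measure_lt htot hε'
    obtain ⟨ϖ, hϖ0, hϖd⟩ : ∃ ϖ : ℝ, 0 < ϖ ∧ ENNReal.ofReal ϖ < d := by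
      rcases eq_or_ne d ⊤ with h | h
      · exact ⟨1, one_pos, by simp [h]⟩
      · have hdt : 0 < d.toReal := ENNReal.toReal_pos hd0.ne' h
        refine ⟨d.toReal / 2, by positivity, ?_⟩
        rw [ENNReal.ofReal_lt_iff_lt_toReal (by positivity) h]
        linarith
    refine ⟨ϖ, hϖ0, fun A hA hvA => ?_⟩
    rw [hrepr A hA]
    refine le_of_lt (hd A (lt_of_le_of_lt ?_ hϖd))
    calc (volume.restrict (Set.Icc (0:ℝ) T)) A = volume (A ∩ Set.Icc 0 T) :=
        Measure.restrict_apply hA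
    _ ≤ volume A := measure_mono Set.inter_subset_left
    _ ≤ ENNReal.ofReal ϖ := hvA
  -- the key uniform-integrability estimate
  have key : ∀ ε : ℝ, 0 < ε → ∃ ϖ : ℝ, 0 < ϖ ∧ ∀ A : Set ℝ, MeasurableSet A →
      volume A ≤ ENNReal.ofReal ϖ → ∀ φ ∈ SN,
      ∫⁻ q in A ×ˢ (Set.univ : Set 𝕏), ENNReal.ofReal (Lf q * |φ q - 1|) ∂νT ≤
        ENNReal.ofReal ε := by
    intro ε hε
    have hσδ : δ ≤ max δ (3 * (C.toReal + N + 1) / ε) := le_max_left _ _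
    set σ := max δ (3 * (C.toReal + N + 1) / ε) with hσdef
    have hσ0 : 0 < σ := lt_of_lt_of_le hδ hσδ
    set X := 1 + 3 * σ * (N + 1) / (δ * ε) with hXdef
    set β := max (Real.exp 2) (Real.exp X) with hβdef
    have hβe : Real.exp 2 ≤ β := le_max_left _ _
    have hβ0 : (0:ℝ) < β := lt_of_lt_of_le (Real.exp_pos 2) hβe
    have hlogβX : X ≤ Real.log β := by
      calc X = Real.log (Real.exp X) := (Real.log_exp X).symm
      _ ≤ Real.log β := Real.log_le_log (Real.exp_pos X) (le_max_right _ _)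
    have hlogβ2 : 2 ≤ Real.log β := by
      calc (2:ℝ) = Real.log (Real.exp 2) := (Real.log_exp 2).symm
      _ ≤ Real.log β := Real.log_le_log (Real.exp_pos 2) hβe
    have hβ2 : (2:ℝ) ≤ β := le_trans (by nlinarith [Real.add_one_le_exp 2]) hβe
    have hlb : 0 < Real.log β - 1 := by linarith
    set κ := 8 + (β - 1) / (2 * Real.log 2 - 1) with hκdef
    have hκ0 : 0 < κ := hκpos β hβ2
    have hκN : (0:ℝ) < κ * (N + 1) := by positivity
    set a := Real.sqrt (κ * (N + 1)) with hadef
    have ha0 : 0 < a := Real.sqrt_pos.2 hκN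
    set m := (ε / (3 * a))^2 with hmdef
    have hm0 : 0 < m := by positivity
    obtain ⟨ϖ, hϖ0, hsm⟩ := small (ENNReal.ofReal m) (ENNReal.ofReal_pos.2 hm0).ne'
    refine ⟨ϖ, hϖ0, ?_⟩
    intro A hA hvA φ hφ
    rw [hSN] at hφ
    obtain ⟨hφm, hφnn, hφN⟩ := hφ
    have hmas := master σ β hσδ hβe φ hφm hφnn hφN A hA
    refine le_trans hmas ?_
    have hS := hsm A hA hvA
    have h1 : (∫⁻ q in A ×ˢ (Set.univ : Set 𝕏), ENNReal.ofReal (Lf q ^ (2:ℕ)) ∂νT) ^ (1/2:ℝ) *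
        ENNReal.ofReal a ≤ ENNReal.ofReal (ε/3) := by
      calc (∫⁻ q in A ×ˢ (Set.univ : Set 𝕏), ENNReal.ofReal (Lf q ^ (2:ℕ)) ∂νT) ^ (1/2:ℝ) *
            ENNReal.ofReal a
          ≤ (ENNReal.ofReal m) ^ (1/2:ℝ) * ENNReal.ofReal a :=
            mul_le_mul_left (ENNReal.rpow_le_rpow hS (by norm_num)) _
      _ = ENNReal.ofReal (ε / (3 * a)) * ENNReal.ofReal a := by
          rw [ENNReal.ofReal_rpow_of_nonneg hm0.le (by norm_num), hmdef,
            ← Real.sqrt_eq_rpow, Real.sqrt_sq (by positivity)]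
      _ = ENNReal.ofReal (ε / (3 * a) * a) := (ENNReal.ofReal_mul (by positivity)).symm
      _ = ENNReal.ofReal (ε/3) := by
          congr 1
          field_simp
    have ht1 : σ / (δ * (Real.log β - 1)) * N ≤ ε / 3 := by
      have hd : 3 * σ * (N + 1) / ε ≤ δ * (Real.log β - 1) := by
        have hX1 : X - 1 = 3 * σ * (N + 1) / (δ * ε) := by rw [hXdef]; ring
        have h2 : δ * (X - 1) ≤ δ * (Real.log β - 1) :=
          mul_le_mul_of_nonneg_left (by linarith) hδ.le
        calc 3 * σ * (N + 1) / ε = δ * (3 * σ * (N + 1) / (δ * ε)) := by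
              field_simp
        _ = δ * (X - 1) := by rw [hX1]
        _ ≤ _ := h2
      have hpos : 0 < 3 * σ * (N + 1) / ε := by positivity
      have hfrac : σ / (δ * (Real.log β - 1)) ≤ σ / (3 * σ * (N + 1) / ε) :=
        div_le_div_of_nonneg_left hσ0.le hpos hd
      have heq : σ / (3 * σ * (N + 1) / ε) = ε / (3 * (N + 1)) := by
        field_simp
      calc σ / (δ * (Real.log β - 1)) * N ≤ ε / (3 * (N + 1)) * N :=
          mul_le_mul_of_nonneg_right (heq ▸ hfrac) (Nat.cast_nonneg N)
      _ ≤ ε / (3 * (N + 1)) * (N + 1) :=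
          mul_le_mul_of_nonneg_left (by linarith) (by positivity)
      _ = ε / 3 := by
          field_simp
    have ht2 : σ⁻¹ * (C.toReal + N) ≤ ε / 3 := by
      have hσge : 3 * (C.toReal + N + 1) / ε ≤ σ := le_max_right _ _
      have hp : 0 < 3 * (C.toReal + N + 1) / ε := by positivity
      have h2 : σ⁻¹ ≤ ε / (3 * (C.toReal + N + 1)) := by
        calc σ⁻¹ ≤ (3 * (C.toReal + N + 1) / ε)⁻¹ := inv_anti₀ hp hσge
        _ = ε / (3 * (C.toReal + N + 1)) := by field_simp
      calc σ⁻¹ * (C.toReal + N) ≤ ε / (3 * (C.toReal + N + 1)) * (C.toReal + N) :=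
          mul_le_mul_of_nonneg_right h2 (by positivity)
      _ ≤ ε / (3 * (C.toReal + N + 1)) * (C.toReal + N + 1) :=
          mul_le_mul_of_nonneg_left (by linarith) (by positivity)
      _ = ε / 3 := by
          field_simp
    have h2 : ENNReal.ofReal (σ / (δ * (Real.log β - 1)) * N + σ⁻¹ * (C.toReal + N)) ≤
        ENNReal.ofReal (2 * ε / 3) := ENNReal.ofReal_le_ofReal (by linarith)
    calc (∫⁻ q in A ×ˢ (Set.univ : Set 𝕏), ENNReal.ofReal (Lf q ^ (2:ℕ)) ∂νT) ^ (1/2:ℝ) *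
          ENNReal.ofReal a
        + ENNReal.ofReal (σ / (δ * (Real.log β - 1)) * N + σ⁻¹ * (C.toReal + N))
        ≤ ENNReal.ofReal (ε/3) + ENNReal.ofReal (2 * ε / 3) := add_le_add h1 h2
    _ = ENNReal.ofReal ε := by
        rw [← ENNReal.ofReal_add (by positivity) (by positivity)]
        congr 1
        ring
  -- the core pathwise estimate
  have core : ∀ r : ℝ → V, StronglyMeasurable r → (∀ t ∈ Set.Icc (0 : ℝ) T, ‖i (r t)‖ ≤ M) →
      ∀ g : ℝ × 𝕏 → ℝ, Measurable g →
      Integrable (fun q : ℝ × 𝕏 => (g q - 1) • f q.1 (r q.1) q.2) νT →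
      ∀ s t : ℝ, 0 ≤ s → s ≤ t → t ≤ T →
      ENNReal.ofReal
          ‖(∫ l in Set.Icc 0 t, ∫ z, (g (l, z) - 1) • f l (r l) z ∂ν)
            - ∫ l in Set.Icc 0 s, ∫ z, (g (l, z) - 1) • f l (r l) z ∂ν‖
        ≤ ENNReal.ofReal (M + 1) *
          ∫⁻ q in Set.Icc s t ×ˢ (Set.univ : Set 𝕏),
            ENNReal.ofReal (Lf q * |g q - 1|) ∂νT := by
    intro r hr hrM g hgm hInt s t hs hst htT
    have hGint : Integrable (fun q : ℝ × 𝕏 => (g q - 1) • f q.1 (r q.1) q.2)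
        ((volume.restrict (Set.Icc (0:ℝ) T)).prod ν) := by rw [← hνT]; exact hInt
    have hF : Integrable (fun l => ∫ z, (g (l, z) - 1) • f l (r l) z ∂ν)
        (volume.restrict (Set.Icc (0:ℝ) T)) := by
      have h := hGint.integral_prod_left
      simpa using h
    have hIOn : ∀ u : ℝ, 0 ≤ u → u ≤ T →
        IntegrableOn (fun l => ∫ z, (g (l, z) - 1) • f l (r l) z ∂ν) (Set.Icc 0 u) volume := by
      intro u _ hu
      exact MeasureTheory.IntegrableOn.mono_set hF (Set.Icc_subset_Icc le_rfl hu)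
    have hIOn' : IntegrableOn (fun l => ∫ z, (g (l, z) - 1) • f l (r l) z ∂ν)
        (Set.Ioc s t) volume :=
      MeasureTheory.IntegrableOn.mono_set hF
        (fun x hx => ⟨le_trans hs hx.1.le, le_trans hx.2 htT⟩)
    have hdisj : Disjoint (Set.Icc (0:ℝ) s) (Set.Ioc s t) :=
      Set.disjoint_left.2 fun x hx hx' => absurd hx.2 (not_le.2 hx'.1)
    have hunion : Set.Icc (0:ℝ) s ∪ Set.Ioc s t = Set.Icc 0 t := Set.Icc_union_Ioc_eq_Icc hs hst
    have key1 : (∫ l in Set.Icc 0 t, ∫ z, (g (l, z) - 1) • f l (r l) z ∂ν)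
        - (∫ l in Set.Icc 0 s, ∫ z, (g (l, z) - 1) • f l (r l) z ∂ν)
        = ∫ l in Set.Ioc s t, ∫ z, (g (l, z) - 1) • f l (r l) z ∂ν := by
      rw [← hunion, setIntegral_union hdisj measurableSet_Ioc (hIOn s hs (hst.trans htT)) hIOn']
      abel
    rw [key1, ofReal_norm]
    refine le_trans (enorm_integral_le_lintegral_enorm _) ?_
    have step2 : ∫⁻ l in Set.Ioc s t,
          (‖∫ z, (g (l, z) - 1) • f l (r l) z ∂ν‖₊ : ℝ≥0∞) ∂volume
        ≤ ∫⁻ l in Set.Ioc s t, ∫⁻ z,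
            ENNReal.ofReal (M + 1) * ENNReal.ofReal (Lf (l, z) * |g (l, z) - 1|) ∂ν ∂volume := by
      refine setLIntegral_mono' measurableSet_Ioc fun l hl => ?_
      refine le_trans (enorm_integral_le_lintegral_enorm _) ?_
      refine lintegral_mono fun z => ?_
      have hlT : l ∈ Set.Icc (0:ℝ) T := ⟨le_trans hs hl.1.le, le_trans hl.2 htT⟩
      have hb := hfb l (r l) z
      have hM' := hrM l hlT
      have hnorm : ‖(g (l, z) - 1) • f l (r l) z‖ ≤ (M + 1) * (Lf (l, z) * |g (l, z) - 1|) := by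
        rw [norm_smul, Real.norm_eq_abs]
        have hi0 : (0:ℝ) ≤ ‖i (r l)‖ := norm_nonneg _
        have h1 : ‖f l (r l) z‖ ≤ Lf (l, z) * (1 + M) := by nlinarith [hLfnn (l, z)]
        calc |g (l, z) - 1| * ‖f l (r l) z‖
            ≤ |g (l, z) - 1| * (Lf (l, z) * (1 + M)) :=
              mul_le_mul_of_nonneg_left h1 (abs_nonneg _)
        _ = (M + 1) * (Lf (l, z) * |g (l, z) - 1|) := by ring
      calc ((‖(g (l, z) - 1) • f l (r l) z‖₊ : ℝ≥0∞))
          = ENNReal.ofReal ‖(g (l, z) - 1) • f l (r l) z‖ := (ofReal_norm _).symm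
      _ ≤ ENNReal.ofReal ((M + 1) * (Lf (l, z) * |g (l, z) - 1|)) :=
          ENNReal.ofReal_le_ofReal hnorm
      _ = ENNReal.ofReal (M + 1) * ENNReal.ofReal (Lf (l, z) * |g (l, z) - 1|) :=
          ENNReal.ofReal_mul (by linarith)
    refine le_trans step2 ?_
    have step3 : ∫⁻ l in Set.Ioc s t, ∫⁻ z,
          ENNReal.ofReal (M + 1) * ENNReal.ofReal (Lf (l, z) * |g (l, z) - 1|) ∂ν ∂volume
        = ENNReal.ofReal (M + 1) * ∫⁻ l in Set.Ioc s t, ∫⁻ z,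
            ENNReal.ofReal (Lf (l, z) * |g (l, z) - 1|) ∂ν ∂volume := by
      simp_rw [lintegral_const_mul' (ENNReal.ofReal (M + 1)) _ ENNReal.ofReal_ne_top]
    rw [step3]
    refine mul_le_mul_right (le_of_eq ?_) _
    have hmeask : Measurable fun q : ℝ × 𝕏 => ENNReal.ofReal (Lf q * |g q - 1|) :=
      ENNReal.measurable_ofReal.comp (hLfm.mul ((hgm.sub measurable_const).abs))
    have hmeq : νT.restrict (Set.Icc s t ×ˢ (Set.univ : Set 𝕏)) =
        (volume.restrict (Set.Ioc s t)).prod ν := by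
      rw [hνT, ← Measure.prod_restrict, Measure.restrict_univ,
        Measure.restrict_restrict measurableSet_Icc,
        Set.inter_eq_left.2 (Set.Icc_subset_Icc hs htT),
        ← Measure.restrict_congr_set Ioc_ae_eq_Icc]
    rw [hmeq, MeasureTheory.lintegral_prod _ hmeask.aemeasurable]
  -- a uniform global bound
  have global : ∀ φ ∈ SN, ∫⁻ q, ENNReal.ofReal (Lf q * |φ q - 1|) ∂νT ≤
      (∫⁻ q, ENNReal.ofReal (Lf q ^ (2:ℕ)) ∂νT) ^ (1/2 : ℝ) *
        ENNReal.ofReal (Real.sqrt ((8 + (Real.exp 2 - 1) / (2 * Real.log 2 - 1)) * (N + 1)))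
      + ENNReal.ofReal (δ / (δ * (Real.log (Real.exp 2) - 1)) * N + δ⁻¹ * (C.toReal + N)) := by
    intro φ hφ
    rw [hSN] at hφ
    obtain ⟨hφm, hφnn, hφN⟩ := hφ
    have h := master δ (Real.exp 2) le_rfl le_rfl φ hφm hφnn hφN Set.univ MeasurableSet.univ
    simpa [Set.univ_prod_univ, Measure.restrict_univ] using h
  have hglobfin : (⨆ φ ∈ SN, ∫⁻ q, ENNReal.ofReal (Lf q * |φ q - 1|) ∂νT) < ⊤ := by
    refine lt_of_le_of_lt (iSup₂_le global) ?_
    refine ENNReal.add_lt_top.2 ⟨ENNReal.mul_lt_top ?_ ENNReal.ofReal_lt_top, ENNReal.ofReal_lt_top⟩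
    exact ENNReal.rpow_lt_top_of_nonneg (by norm_num) hS2
  refine ⟨?_, ⟨hglobfin, ?_⟩, ?_⟩
  · -- (i)
    intro r hr hrM g hg hInt s t hs hst htT
    refine le_trans (core r hr hrM g ?_ hInt s t hs hst htT) ?_
    · rw [hSN] at hg; exact hg.1
    · exact mul_le_mul_right (le_iSup₂ (f := fun φ (_ : φ ∈ SN) =>
        ∫⁻ q in Set.Icc s t ×ˢ (Set.univ : Set 𝕏),
          ENNReal.ofReal (Lf q * |φ q - 1|) ∂νT) g hg) _
  · -- (ii) second half
    intro r hr hrM g hg hInt t ht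
    have h0 : (∫ l in Set.Icc (0:ℝ) 0, ∫ z, (g (l, z) - 1) • f l (r l) z ∂ν) = 0 := by
      rw [Set.Icc_self]
      have : (volume.restrict ({0} : Set ℝ)) = 0 :=
        Measure.restrict_eq_zero.2 (by simp)
      rw [this, integral_zero_measure]
    have hcore := core r hr hrM g (by rw [hSN] at hg; exact hg.1) hInt 0 t le_rfl ht.1 ht.2
    rw [h0, sub_zero] at hcore
    refine le_trans hcore (mul_le_mul_right ?_ _)
    have h1 : ∫⁻ q in Set.Icc 0 t ×ˢ (Set.univ : Set 𝕏),
        ENNReal.ofReal (Lf q * |g q - 1|) ∂νT ≤ ∫⁻ q, ENNReal.ofReal (Lf q * |g q - 1|) ∂νT :=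
      setLIntegral_le_lintegral _ _
    exact le_trans h1 (le_iSup₂ (f := fun φ (_ : φ ∈ SN) =>
      ∫⁻ q, ENNReal.ofReal (Lf q * |φ q - 1|) ∂νT) g hg)
  · -- (iii)
    intro η hη
    have hM1 : (0:ℝ) < M + 1 := by linarith
    obtain ⟨ϖ, hϖ, hkey⟩ := key (η / (M + 1)) (by positivity)
    refine ⟨ϖ, hϖ, ?_⟩
    intro r hr hrM g hg hInt s t hsI htI hts
    have hgm : Measurable g := by rw [hSN] at hg; exact hg.1
    -- wlog s ≤ t
    have main : ∀ s t : ℝ, s ∈ Set.Icc (0:ℝ) T → t ∈ Set.Icc (0:ℝ) T → s ≤ t → t - s ≤ ϖ →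
        ‖(∫ l in Set.Icc 0 t, ∫ z, (g (l, z) - 1) • f l (r l) z ∂ν)
            - ∫ l in Set.Icc 0 s, ∫ z, (g (l, z) - 1) • f l (r l) z ∂ν‖ ≤ η := by
      intro s t hsI htI hst hts
      have hcore := core r hr hrM g hgm hInt s t hsI.1 hst htI.2
      have hA : volume (Set.Icc s t) ≤ ENNReal.ofReal ϖ := by
        rw [Real.volume_Icc]
        exact ENNReal.ofReal_le_ofReal hts
      have hk := hkey (Set.Icc s t) measurableSet_Icc hA g hg
      have hfin : ENNReal.ofReal ‖(∫ l in Set.Icc 0 t, ∫ z, (g (l, z) - 1) • f l (r l) z ∂ν)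
            - ∫ l in Set.Icc 0 s, ∫ z, (g (l, z) - 1) • f l (r l) z ∂ν‖
          ≤ ENNReal.ofReal η := by
        refine le_trans hcore ?_
        calc ENNReal.ofReal (M + 1) *
            ∫⁻ q in Set.Icc s t ×ˢ (Set.univ : Set 𝕏),
              ENNReal.ofReal (Lf q * |g q - 1|) ∂νT
            ≤ ENNReal.ofReal (M + 1) * ENNReal.ofReal (η / (M + 1)) := by gcongr
          _ = ENNReal.ofReal ((M + 1) * (η / (M + 1))) := (ENNReal.ofReal_mul (by linarith)).symm
          _ = ENNReal.ofReal η := by rw [mul_div_cancel₀ _ hM1.ne']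
      exact (ENNReal.ofReal_le_ofReal_iff hη.le).1 hfin
    rcases le_total s t with hst | hst
    · exact main s t hsI htI hst (by rw [abs_of_nonneg (by linarith)] at hts; linarith)
    · rw [← norm_neg, neg_sub]
      exact main t s htI hsI hst (by rw [abs_of_nonpos (by linarith)] at hts; linarith)
end
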